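/- arXiv:1203.4772 — 3 statements merged into one kernel-verified Lean document; each statement's English description precedes it below -/
import Mathlib

section
/- Every n-dimensional null-filiform complex Leibniz algebra L admits a basis e_1, e_2, …, e_n in which the only nonzero products are [e_i, e_1] = e_{i+1} for 1 ≤ i ≤ n−1 (i.e. L is isomorphic to the algebra NF_n). -/
open Finset Module

/-- The Leibniz identity for a bilinear bracket `b`. -/
def IsLeibniz {L : Type*} [AddCommGroup L] [Module ℂ L]
    (b : L →ₗ[ℂ] L →ₗ[ℂ] L) : Prop :=
  ∀ x y z, b x (b y z) = b (b x y) z - b (b x z) y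

/-- The submodule spanned by all brackets `[S, T]`. -/
def bracketSpan {L : Type*} [AddCommGroup L] [Module ℂ L]
    (b : L →ₗ[ℂ] L →ₗ[ℂ] L) (S T : Submodule ℂ L) : Submodule ℂ L :=
  Submodule.span ℂ {z | ∃ x ∈ S, ∃ y ∈ T, z = b x y}

/-- The lower central series: `lcs b k` is `L^{k+1}`, i.e. `lcs b 0 = L¹ = L`. -/
def lcs {L : Type*} [AddCommGroup L] [Module ℂ L]
    (b : L →ₗ[ℂ] L →ₗ[ℂ] L) : ℕ → Submodule ℂ L
  | 0 => ⊤
  | k+1 => bracketSpan b (lcs b k) ⊤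

/-- The derived series: `derSeries b s` is `L^{[s+1]}`. -/
def derSeries {L : Type*} [AddCommGroup L] [Module ℂ L]
    (b : L →ₗ[ℂ] L →ₗ[ℂ] L) : ℕ → Submodule ℂ L
  | 0 => ⊤
  | s+1 => bracketSpan b (derSeries b s) (derSeries b s)

/-- The algebra `(L, b)` is nilpotent. -/
def IsNilpotentAlg {L : Type*} [AddCommGroup L] [Module ℂ L]
    (b : L →ₗ[ℂ] L →ₗ[ℂ] L) : Prop :=
  ∃ k, lcs b k = ⊥

/-- The algebra `(L, b)` is solvable. -/
def IsSolvableAlg {L : Type*} [AddCommGroup L] [Module ℂ L]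
    (b : L →ₗ[ℂ] L →ₗ[ℂ] L) : Prop :=
  ∃ s, derSeries b s = ⊥

/-- `I` is a two-sided ideal of `(L, b)`. -/
def IsIdeal {L : Type*} [AddCommGroup L] [Module ℂ L]
    (b : L →ₗ[ℂ] L →ₗ[ℂ] L) (I : Submodule ℂ L) : Prop :=
  ∀ a ∈ I, ∀ y : L, b a y ∈ I ∧ b y a ∈ I

/-- Lower central series of the ideal `I` computed inside `L`:
`idealLCS b I k` is `I^{k+1}`. -/
def idealLCS {L : Type*} [AddCommGroup L] [Module ℂ L]
    (b : L →ₗ[ℂ] L →ₗ[ℂ] L) (I : Submodule ℂ L) : ℕ → Submodule ℂ L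
  | 0 => I
  | k+1 => bracketSpan b (idealLCS b I k) I

/-- `I` is a nilpotent two-sided ideal of `(L, b)`. -/
def IsNilpotentIdeal {L : Type*} [AddCommGroup L] [Module ℂ L]
    (b : L →ₗ[ℂ] L →ₗ[ℂ] L) (I : Submodule ℂ L) : Prop :=
  IsIdeal b I ∧ ∃ k, idealLCS b I k = ⊥

/-- `I` is the nilradical (the maximal nilpotent ideal) of `(L, b)`. -/
def IsNilradical {L : Type*} [AddCommGroup L] [Module ℂ L]
    (b : L →ₗ[ℂ] L →ₗ[ℂ] L) (I : Submodule ℂ L) : Prop :=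
  IsNilpotentIdeal b I ∧ ∀ J : Submodule ℂ L, IsNilpotentIdeal b J → J ≤ I

/-- Isomorphism of bracket algebras. -/
def LeibnizIso {L M : Type*} [AddCommGroup L] [Module ℂ L] [AddCommGroup M] [Module ℂ M]
    (bL : L →ₗ[ℂ] L →ₗ[ℂ] L) (bM : M →ₗ[ℂ] M →ₗ[ℂ] M) : Prop :=
  ∃ e : L ≃ₗ[ℂ] M, ∀ x y : L, e (bL x y) = bM (e x) (e y)

/-- The nilradical of `(L, bL)` is isomorphic (as an algebra) to `(M, bM)`. -/
def NilradicalIso {L M : Type*} [AddCommGroup L] [Module ℂ L] [AddCommGroup M] [Module ℂ M]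
    (bL : L →ₗ[ℂ] L →ₗ[ℂ] L) (bM : M →ₗ[ℂ] M →ₗ[ℂ] M) : Prop :=
  ∃ I : Submodule ℂ L, IsNilradical bL I ∧
    ∃ f : M →ₗ[ℂ] L, Function.Injective f ∧ LinearMap.range f = I ∧
      ∀ x y : M, f (bM x y) = bL (f x) (f y)

/-- A derivation of the algebra `(L, b)`. -/
def IsDerivation {L : Type*} [AddCommGroup L] [Module ℂ L]
    (b : L →ₗ[ℂ] L →ₗ[ℂ] L) (d : L →ₗ[ℂ] L) : Prop :=
  ∀ x y : L, d (b x y) = b (d x) y + b x (d y)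

/-- The bilinear bracket on `Fin n → ℂ` determined by structure constants `c`. -/
noncomputable def bilin (n : ℕ) (c : Fin n → Fin n → Fin n → ℂ) :
    (Fin n → ℂ) →ₗ[ℂ] (Fin n → ℂ) →ₗ[ℂ] (Fin n → ℂ) :=
  LinearMap.mk₂ ℂ (fun x y k => ∑ i, ∑ j, x i * y j * c i j k)
    (by intro x x' y; funext k; simp [add_mul, Finset.sum_add_distrib])
    (by intro a x y; funext k; simp [Finset.mul_sum, mul_assoc])
    (by intro x y y'; funext k; simp [mul_add, add_mul, Finset.sum_add_distrib])
    (by intro a x y; funext k; simp [Finset.mul_sum, mul_assoc, mul_left_comm])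

/-- The paper's basis vector `e_i` (1-indexed: valid for `1 ≤ i ≤ n`). -/
noncomputable def E (n : ℕ) (i : ℕ) : Fin n → ℂ :=
  if h : 1 ≤ i ∧ i ≤ n then Pi.single (⟨i - 1, by omega⟩ : Fin n) 1 else 0

/-- Structure constants of the null-filiform algebra `NF_n`:
`[e_i, e_1] = e_{i+1}` for `1 ≤ i ≤ n-1` (indices are 0-based). -/
noncomputable def cNF (n : ℕ) : Fin n → Fin n → Fin n → ℂ := fun i j k =>
  if j.val = 0 ∧ k.val = i.val + 1 then 1 else 0

/-- Structure constants of `F_n^1`: `[e_1,e_1] = e_3`, `[e_i,e_1] = e_{i+1}` for `2 ≤ i ≤ n-1`. -/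
noncomputable def cF1 (n : ℕ) : Fin n → Fin n → Fin n → ℂ := fun i j k =>
  if j.val = 0 ∧ ((i.val = 0 ∧ k.val = 2) ∨ (1 ≤ i.val ∧ k.val = i.val + 1)) then 1 else 0

/-- Structure constants of `F_n^2`: `[e_1,e_1] = e_3`, `[e_i,e_1] = e_{i+1}` for `3 ≤ i ≤ n-1`. -/
noncomputable def cF2 (n : ℕ) : Fin n → Fin n → Fin n → ℂ := fun i j k =>
  if j.val = 0 ∧ ((i.val = 0 ∧ k.val = 2) ∨ (2 ≤ i.val ∧ k.val = i.val + 1)) then 1 else 0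

/-- Structure constants of the filiform Lie algebra `n_{n,1}`:
`[e_i,e_1] = -[e_1,e_i] = e_{i+1}` for `2 ≤ i ≤ n-1`. -/
noncomputable def cNn (n : ℕ) : Fin n → Fin n → Fin n → ℂ := fun i j k =>
  (if j.val = 0 ∧ 1 ≤ i.val ∧ k.val = i.val + 1 then 1 else 0)
  - (if i.val = 0 ∧ 1 ≤ j.val ∧ k.val = j.val + 1 then 1 else 0)

/-- Structure constants of the filiform Lie algebra `Q_{2n}` (on `Fin (2*n)`). -/
noncomputable def cQ (n : ℕ) : Fin (2*n) → Fin (2*n) → Fin (2*n) → ℂ := fun i j k =>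
  (if j.val = 0 ∧ 1 ≤ i.val ∧ i.val ≤ 2*n - 3 ∧ k.val = i.val + 1 then 1 else 0)
  - (if i.val = 0 ∧ 1 ≤ j.val ∧ j.val ≤ 2*n - 3 ∧ k.val = j.val + 1 then 1 else 0)
  + (if 1 ≤ i.val ∧ i.val ≤ n - 1 ∧ i.val + j.val = 2*n - 1 ∧ k.val = 2*n - 1
      then (-1 : ℂ)^(i.val + 1) else 0)
  - (if 1 ≤ j.val ∧ j.val ≤ n - 1 ∧ i.val + j.val = 2*n - 1 ∧ k.val = 2*n - 1
      then (-1 : ℂ)^(j.val + 1) else 0)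

/-- Structure constants of `R_{n+1,1}(γ₁,γ₂,γ₃)` (basis `e_1,…,e_n,x`; `x` has 0-based index `n`). -/
noncomputable def cRn (n : ℕ) (g1 g2 g3 : ℂ) : Fin (n+1) → Fin (n+1) → Fin (n+1) → ℂ := fun i j k =>
  (if j.val = 0 ∧ 1 ≤ i.val ∧ i.val ≤ n - 2 ∧ k.val = i.val + 1 then 1 else 0)
  - (if i.val = 0 ∧ 1 ≤ j.val ∧ j.val ≤ n - 2 ∧ k.val = j.val + 1 then 1 else 0)
  + (if i.val = 0 ∧ j.val = n ∧ k.val = 0 then 1 else 0)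
  - (if i.val = n ∧ j.val = 0 ∧ k.val = 0 then 1 else 0)
  + (if i.val = n ∧ j.val = 0 ∧ k.val = n - 1 then g1 else 0)
  + (if 1 ≤ i.val ∧ i.val ≤ n - 2 ∧ j.val = n ∧ k.val = i.val then ((i.val : ℂ) + 1 - n) else 0)
  + (if i.val = n ∧ 1 ≤ j.val ∧ j.val ≤ n - 2 ∧ k.val = j.val then ((n : ℂ) - j.val - 1) else 0)
  + (if i.val = n ∧ j.val = 1 ∧ k.val = n - 1 then g2 else 0)
  + (if i.val = n ∧ j.val = n ∧ k.val = n - 1 then g3 else 0)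

/-- Structure constants of `R_{2n+1,1}(γ₁,γ₂,γ₃)` (basis `e_1,…,e_{2n},x`; `x` has 0-based index `2n`). -/
noncomputable def cRQ (n : ℕ) (g1 g2 g3 : ℂ) : Fin (2*n+1) → Fin (2*n+1) → Fin (2*n+1) → ℂ := fun i j k =>
  (if j.val = 0 ∧ 1 ≤ i.val ∧ i.val ≤ 2*n - 3 ∧ k.val = i.val + 1 then 1 else 0)
  - (if i.val = 0 ∧ 1 ≤ j.val ∧ j.val ≤ 2*n - 3 ∧ k.val = j.val + 1 then 1 else 0)
  + (if 1 ≤ i.val ∧ i.val ≤ n - 1 ∧ i.val + j.val = 2*n - 1 ∧ k.val = 2*n - 1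
      then (-1 : ℂ)^(i.val + 1) else 0)
  - (if 1 ≤ j.val ∧ j.val ≤ n - 1 ∧ i.val + j.val = 2*n - 1 ∧ k.val = 2*n - 1
      then (-1 : ℂ)^(j.val + 1) else 0)
  + (if i.val = 0 ∧ j.val = 2*n ∧ k.val = 0 then 1 else 0)
  - (if i.val = 2*n ∧ j.val = 0 ∧ k.val = 0 then 1 else 0)
  + (if i.val = 2*n ∧ j.val = 0 ∧ k.val = n - 1 then g1 else 0)
  + (if 1 ≤ i.val ∧ i.val ≤ 2*n - 2 ∧ j.val = 2*n ∧ k.val = i.val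
      then ((2*n : ℂ) + 2*((i.val : ℂ) + 1) - 7)/2 else 0)
  - (if i.val = 2*n ∧ 1 ≤ j.val ∧ j.val ≤ 2*n - 2 ∧ k.val = j.val
      then ((2*n : ℂ) + 2*((j.val : ℂ) + 1) - 7)/2 else 0)
  + (if i.val = 2*n ∧ j.val = 1 ∧ k.val = n - 1 then g2 else 0)
  + (if i.val = 2*n ∧ j.val = 2*n ∧ k.val = n - 1 then g3 else 0)


section NFAux

variable {L : Type*} [AddCommGroup L] [Module ℂ L] (b : L →ₗ[ℂ] L →ₗ[ℂ] L)

lemma mem_bracketSpan' {S T : Submodule ℂ L} {x y : L} (hx : x ∈ S) (hy : y ∈ T) :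
    b x y ∈ bracketSpan b S T :=
  Submodule.subset_span ⟨x, hx, y, hy, rfl⟩

lemma bracketSpan_le' {S T U : Submodule ℂ L} (h : ∀ x ∈ S, ∀ y ∈ T, b x y ∈ U) :
    bracketSpan b S T ≤ U := by
  rw [bracketSpan, Submodule.span_le]
  rintro z ⟨x, hx, y, hy, rfl⟩
  exact h x hx y hy

lemma bracketSpan_mono' {S S' T T' : Submodule ℂ L} (hS : S ≤ S') (hT : T ≤ T') :
    bracketSpan b S T ≤ bracketSpan b S' T' :=
  bracketSpan_le' b fun x hx y hy => mem_bracketSpan' b (hS hx) (hT hy)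

lemma lcs_succ_eq (k : ℕ) : lcs b (k + 1) = bracketSpan b (lcs b k) ⊤ := rfl

lemma bracketSpan_lcs_lcs (hb : IsLeibniz b) :
    ∀ j i : ℕ, bracketSpan b (lcs b i) (lcs b j) ≤ lcs b (i + j + 1) := by
  intro j
  induction j with
  | zero => intro i; exact le_of_eq rfl
  | succ j ih =>
    intro i
    refine bracketSpan_le' b ?_
    intro x hx w hw
    have key : lcs b (j + 1) ≤ (lcs b (i + (j + 1) + 1)).comap (b x) := by
      rw [lcs_succ_eq]
      refine bracketSpan_le' b ?_
      intro y hy z hz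
      simp only [Submodule.mem_comap]
      rw [hb x y z]
      have h1 : b (b x y) z ∈ lcs b (i + j + 1 + 1) :=
        mem_bracketSpan' b (ih i (mem_bracketSpan' b hx hy)) trivial
      have h2 : b x z ∈ lcs b (i + 1) := mem_bracketSpan' b hx trivial
      have h3 : b (b x z) y ∈ lcs b (i + 1 + j + 1) :=
        ih (i + 1) (mem_bracketSpan' b h2 hy)
      have e1 : i + (j + 1) + 1 = i + j + 1 + 1 := by omega
      have e2 : i + 1 + j + 1 = i + j + 1 + 1 := by omega
      rw [e1]
      rw [e2] at h3
      exact sub_mem h1 h3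
    exact key hw

/-- The sequence `e_{k+1} = [e_k, e_1]` (0-indexed). -/
noncomputable def eSeq (e1 : L) : ℕ → L
  | 0 => e1
  | k + 1 => b (eSeq e1 k) e1

lemma eSeq_mem (e1 : L) : ∀ k, eSeq b e1 k ∈ lcs b k := by
  intro k
  induction k with
  | zero => trivial
  | succ k ih => exact mem_bracketSpan' b ih trivial

lemma eSeq_vanish (hb : IsLeibniz b) (e1 : L) :
    ∀ j, 1 ≤ j → ∀ x, b x (eSeq b e1 j) = 0 := by
  intro j hj
  induction j, hj using Nat.le_induction with
  | base =>
    intro x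
    show b x (b (eSeq b e1 0) e1) = 0
    rw [hb]
    exact sub_self _
  | succ j hj ih =>
    intro x
    show b x (b (eSeq b e1 j) e1) = 0
    rw [hb, ih x, ih (b x e1)]
    simp

end NFAux

theorem statement4 (n : ℕ) {L : Type*} [AddCommGroup L] [Module ℂ L] [FiniteDimensional ℂ L]
    (b : L →ₗ[ℂ] L →ₗ[ℂ] L) (hb : IsLeibniz b)
    (hdim : Module.finrank ℂ L = n)
    (hnull : ∀ i : ℕ, 1 ≤ i → i ≤ n + 1 → Module.finrank ℂ (lcs b (i - 1)) = n + 1 - i) :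
    LeibnizIso b (bilin n (cNF n)) := by
  classical
  rcases Nat.eq_zero_or_pos n with hn0 | hn
  · subst hn0
    have hsub : Subsingleton L := by
      rw [← Module.finrank_zero_iff (R := ℂ) (M := L)]; exact hdim
    refine ⟨LinearEquiv.ofFinrankEq _ _ (by simp [hdim]), fun x y => Subsingleton.elim _ _⟩
  -- dimension facts
  have hfin1 : finrank ℂ (lcs b 1) = n - 1 := by
    have h := hnull 2 (by omega) (by omega)
    simpa using h
  have hbot : lcs b n = ⊥ := by
    have h := hnull (n + 1) (by omega) (by omega)
    simp only [Nat.add_sub_cancel, Nat.sub_self] at h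
    exact Submodule.finrank_eq_zero.mp h
  -- pick e1 ∉ L²
  have hlt : lcs b 1 < ⊤ := by
    refine lt_top_iff_ne_top.mpr fun h => ?_
    rw [h, finrank_top, hdim] at hfin1
    omega
  obtain ⟨e1, -, he1⟩ := SetLike.exists_of_lt hlt
  -- ⊤ = ℂ e1 ⊔ L²
  have hWlt : lcs b 1 < (ℂ ∙ e1) ⊔ lcs b 1 := by
    refine lt_of_le_of_ne le_sup_right fun h => he1 ?_
    rw [h]
    exact Submodule.mem_sup_left (Submodule.mem_span_singleton_self e1)
  have hWtop : (ℂ ∙ e1) ⊔ lcs b 1 = ⊤ := by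
    refine Submodule.eq_top_of_finrank_eq ?_
    have h1 : finrank ℂ (lcs b 1) < finrank ℂ ↥((ℂ ∙ e1) ⊔ lcs b 1) :=
      Submodule.finrank_lt_finrank_of_lt hWlt
    have h2 : finrank ℂ ↥((ℂ ∙ e1) ⊔ lcs b 1) ≤ finrank ℂ L := Submodule.finrank_le _
    omega
  -- key step lemma: L^{k+1} ⊆ ℂ e_{k+1} + L^{k+2}
  have hQ : ∀ k, lcs b k ≤ (ℂ ∙ eSeq b e1 k) ⊔ lcs b (k + 1) := by
    intro k
    induction k with
    | zero =>
      show ⊤ ≤ (ℂ ∙ e1) ⊔ lcs b 1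
      rw [hWtop]
    | succ k ih =>
      rw [lcs_succ_eq]
      refine bracketSpan_le' b ?_
      intro x hx y hy
      have hx' := ih hx
      have hy' : y ∈ (ℂ ∙ e1) ⊔ lcs b 1 := by rw [hWtop]; trivial
      obtain ⟨u, hu, u', hu', rfl⟩ := Submodule.mem_sup.mp hx'
      obtain ⟨a, rfl⟩ := Submodule.mem_span_singleton.mp hu
      obtain ⟨w, hw, v', hv', rfl⟩ := Submodule.mem_sup.mp hy'
      obtain ⟨c, rfl⟩ := Submodule.mem_span_singleton.mp hw
      have expand : b (a • eSeq b e1 k + u') (c • e1 + v')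
          = (a * c) • eSeq b e1 (k + 1)
            + ((a • b (eSeq b e1 k) v') + b u' (c • e1 + v')) := by
        show b (a • eSeq b e1 k + u') (c • e1 + v')
            = (a * c) • b (eSeq b e1 k) e1
              + ((a • b (eSeq b e1 k) v') + b u' (c • e1 + v'))
        simp only [map_add, map_smul, LinearMap.add_apply, LinearMap.smul_apply,
            smul_add, smul_smul]
        module
      rw [expand]
      refine add_mem (Submodule.mem_sup_left ?_) (Submodule.mem_sup_right (add_mem ?_ ?_))
      · exact Submodule.smul_mem _ _ (Submodule.mem_span_singleton_self _)
      · refine Submodule.smul_mem _ _ ?_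
        have := bracketSpan_lcs_lcs b hb 1 k (mem_bracketSpan' b (eSeq_mem b e1 k) hv')
        simpa using this
      · exact mem_bracketSpan' b hu' trivial
  -- spanning
  have hspan : ∀ k, lcs b 0 ≤ Submodule.span ℂ (eSeq b e1 '' Set.Iio k) ⊔ lcs b k := by
    intro k
    induction k with
    | zero => exact le_sup_right
    | succ k ih =>
      have h1 : Submodule.span ℂ (eSeq b e1 '' Set.Iio k)
          ≤ Submodule.span ℂ (eSeq b e1 '' Set.Iio (k + 1)) :=
        Submodule.span_mono (Set.image_mono fun x hx => lt_trans hx (Nat.lt_succ_self k))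
      have h2 : (ℂ ∙ eSeq b e1 k) ≤ Submodule.span ℂ (eSeq b e1 '' Set.Iio (k + 1)) :=
        (Submodule.span_singleton_le_iff_mem _ _).mpr
          (Submodule.subset_span ⟨k, Nat.lt_succ_self k, rfl⟩)
      exact ih.trans (sup_le (h1.trans le_sup_left)
        ((hQ k).trans (sup_le (h2.trans le_sup_left) le_sup_right)))
  set v : Fin n → L := fun i => eSeq b e1 i.val with hvdef
  have htop : ⊤ ≤ Submodule.span ℂ (Set.range v) := by
    have h := hspan n
    rw [hbot, sup_bot_eq] at h
    have hsub : eSeq b e1 '' Set.Iio n ⊆ Set.range v := by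
      rintro _ ⟨i, hi, rfl⟩
      exact ⟨⟨i, hi⟩, rfl⟩
    exact le_trans (by rw [show lcs b 0 = (⊤ : Submodule ℂ L) from rfl] at h; exact h)
      (Submodule.span_mono hsub)
  have hcard : Fintype.card (Fin n) = finrank ℂ L := by simp [hdim]
  let B : Basis (Fin n) ℂ L := basisOfTopLeSpanOfCardEqFinrank v htop hcard
  have hB : ∀ i, B i = v i := fun i => by
    rw [coe_basisOfTopLeSpanOfCardEqFinrank]
  let e : L ≃ₗ[ℂ] (Fin n → ℂ) := B.equivFun
  have heB : ∀ i : Fin n, e (B i) = Pi.single i 1 := by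
    intro i
    funext j
    rw [show e (B i) j = B.equivFun (B i) j from rfl, Basis.equivFun_self]
    simp [Pi.single_apply, eq_comm]
  have heSn : eSeq b e1 n = 0 := by
    have h := eSeq_mem b e1 n
    rw [hbot] at h
    simpa using h
  refine ⟨e, ?_⟩
  have key : b.compr₂ (e : L →ₗ[ℂ] (Fin n → ℂ))
      = (bilin n (cNF n)).compl₁₂ (e : L →ₗ[ℂ] (Fin n → ℂ)) (e : L →ₗ[ℂ] (Fin n → ℂ)) := by
    refine B.ext fun i => B.ext fun j => ?_
    simp only [LinearMap.compr₂_apply, LinearMap.compl₁₂_apply, LinearEquiv.coe_coe]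
    rw [heB i, heB j]
    have hbilin : bilin n (cNF n) (Pi.single i 1) (Pi.single j 1) = cNF n i j := by
      funext k
      simp [bilin, Pi.single_apply, ite_mul, mul_ite]
    rw [hbilin, hB i, hB j]
    rcases Nat.eq_zero_or_pos j.val with hj0 | hjpos
    · -- [e_i, e_1] = e_{i+1}
      have hvj : v j = e1 := by simp [hvdef, hj0, eSeq]
      rw [hvj]
      have hlhs : b (v i) e1 = eSeq b e1 (i.val + 1) := rfl
      rcases lt_or_ge (i.val + 1) n with hi | hi
      · have : eSeq b e1 (i.val + 1) = v ⟨i.val + 1, hi⟩ := rfl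
        rw [hlhs, this, ← hB ⟨i.val + 1, hi⟩, heB]
        funext k
        simp only [cNF, hj0, Pi.single_apply]
        by_cases hk : k = ⟨i.val + 1, hi⟩
        · subst hk; simp
        · have : ¬ k.val = i.val + 1 := fun h => hk (Fin.ext h)
          simp [hk, this]
      · have hin : i.val + 1 = n := by omega
        rw [hlhs, hin, heSn, map_zero]
        funext k
        have : ¬ k.val = i.val + 1 := by have := k.isLt; omega
        simp [cNF, this]
    · -- [x, e_j] = 0 for j ≥ 1
      have hz : b (v i) (v j) = 0 := eSeq_vanish b hb e1 j.val hjpos (v i)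
      rw [hz, map_zero]
      funext k
      have : ¬ j.val = 0 := by omega
      simp [cNF, this]
  intro x y
  have h := LinearMap.congr_fun (LinearMap.congr_fun key x) y
  simpa using h
end

section
/- Let n ≥ 4. There is no (n+2)-dimensional solvable non-Lie complex Leibniz algebra whose nilradical is isomorphic to n_{n,1}. -/
open Finset Module

namespace St9

variable {n : ℕ}

lemma bcoord (hn : 4 ≤ n) (x y : Fin n → ℂ) (k : Fin n) :
    bilin n (cNn n) x y k =
      if _ : 2 ≤ k.val then y ⟨0, by omega⟩ * x ⟨k.val - 1, by omega⟩
        - x ⟨0, by omega⟩ * y ⟨k.val - 1, by omega⟩ else 0 := by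
  have hsum : bilin n (cNn n) x y k = ∑ i, ∑ j, x i * y j * cNn n i j k := rfl
  rw [hsum]
  by_cases h2 : 2 ≤ k.val
  · rw [dif_pos h2]
    have hterm : ∀ i j : Fin n, x i * y j * cNn n i j k
        = (if i = (⟨k.val - 1, by omega⟩ : Fin n) ∧ j = (⟨0, by omega⟩ : Fin n) then x i * y j else 0)
          - (if i = (⟨0, by omega⟩ : Fin n) ∧ j = (⟨k.val - 1, by omega⟩ : Fin n) then x i * y j else 0) := by
      intro i j
      simp only [cNn, Fin.ext_iff]
      split_ifs <;> first | ring1 | (exfalso; first | omega | assumption)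
    simp only [hterm, Finset.sum_sub_distrib]
    simp [Finset.sum_ite_eq, Finset.sum_ite_eq', ite_and]
    ring
  · rw [dif_neg h2]
    apply Finset.sum_eq_zero; intro i _
    apply Finset.sum_eq_zero; intro j _
    have : cNn n i j k = 0 := by
      simp only [cNn]
      rw [if_neg (by omega), if_neg (by omega)]
      ring
    rw [this, mul_zero]

/-- `eV n i` is the standard basis vector. -/
noncomputable def eV (n : ℕ) (i : Fin n) : Fin n → ℂ := Pi.single i 1

lemma eV_apply {i j : Fin n} : eV n i j = if j = i then 1 else 0 := Pi.single_apply i 1 j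

lemma bantisym (hn : 4 ≤ n) (x y : Fin n → ℂ) :
    bilin n (cNn n) x y + bilin n (cNn n) y x = 0 := by
  funext k
  simp only [Pi.add_apply, bcoord hn, Pi.zero_apply]
  split_ifs <;> ring

/-- The subspace V_k = span(e_k, ..., e_n) (1-based k). -/
noncomputable def Vs (n k : ℕ) : Submodule ℂ (Fin n → ℂ) where
  carrier := {m | ∀ j : Fin n, j.val + 1 < k → m j = 0}
  add_mem' := by intro a b ha hb j hj; simp [ha j hj, hb j hj]
  zero_mem' := by intro j hj; rfl
  smul_mem' := by intro c a ha j hj; simp [ha j hj]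

lemma mem_Vs {k : ℕ} {m : Fin n → ℂ} :
    m ∈ Vs n k ↔ ∀ j : Fin n, j.val + 1 < k → m j = 0 := Iff.rfl

lemma Vs_antitone {k k' : ℕ} (h : k ≤ k') : Vs n k' ≤ Vs n k := by
  intro m hm j hj; exact hm j (by omega)

lemma Vs_np1 : Vs n (n+1) = ⊥ := by
  apply le_antisymm
  · intro m hm
    have : m = 0 := by funext j; exact hm j (by omega)
    simp [this]
  · exact bot_le

lemma single_mem_Vs {k : ℕ} (j : Fin n) (h : k ≤ j.val + 1) (c : ℂ) :
    Pi.single j c ∈ Vs n k := by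
  intro i hi
  rw [Pi.single_apply, if_neg]
  intro he; rw [he] at hi; omega

lemma eV_mem_Vs {k : ℕ} (j : Fin n) (h : k ≤ j.val + 1) : eV n j ∈ Vs n k :=
  single_mem_Vs j h 1

lemma mem_Vs_succ {k : ℕ} (hk : k ≤ n) (hk2 : 1 ≤ k) {v : Fin n → ℂ}
    (hv : v ∈ Vs n k) (h0 : v ⟨k-1, by omega⟩ = 0) : v ∈ Vs n (k+1) := by
  intro j hj
  by_cases hjk : j.val + 1 < k
  · exact hv j hjk
  · have : j = (⟨k-1, by omega⟩ : Fin n) := by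
      apply Fin.ext; simp; omega
    rw [this]; exact h0

lemma Vs_n_eq (hn : 4 ≤ n) {v : Fin n → ℂ} (hv : v ∈ Vs n n) :
    v = v ⟨n-1, by omega⟩ • eV n ⟨n-1, by omega⟩ := by
  funext j
  by_cases hj : j = (⟨n-1, by omega⟩ : Fin n)
  · rw [hj]; simp [eV]
  · rw [Pi.smul_apply, eV_apply, if_neg hj, smul_eq_mul, mul_zero]
    apply hv
    have : j.val ≠ n - 1 := by intro h; exact hj (Fin.ext (by simp [h]))
    omega

lemma bV3 (hn : 4 ≤ n) (x y : Fin n → ℂ) : bilin n (cNn n) x y ∈ Vs n 3 := by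
  intro j hj
  rw [bcoord hn, dif_neg (by omega)]

lemma bVk (hn : 4 ≤ n) {k : ℕ} (hk : 2 ≤ k) {x : Fin n → ℂ} (hx : x ∈ Vs n k)
    (y : Fin n → ℂ) : bilin n (cNn n) x y ∈ Vs n (k+1) := by
  intro j hj
  rw [bcoord hn]
  split_ifs with h2
  · have hx0 : x ⟨0, by omega⟩ = 0 := hx _ (by simp; omega)
    have hxk : x ⟨j.val - 1, by omega⟩ = 0 := hx _ (by simp; omega)
    rw [hx0, hxk]; ring
  · rfl

lemma bsingle_left (hn : 4 ≤ n) (i : Fin n) (h1 : 1 ≤ i.val) (h2 : i.val + 1 < n)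
    (m : Fin n → ℂ) :
    bilin n (cNn n) (eV n i) m
      = m ⟨0, by omega⟩ • eV n ⟨i.val+1, h2⟩ := by
  funext k
  rw [bcoord hn]
  simp only [Pi.smul_apply, eV, Pi.single_apply, Fin.ext_iff, smul_eq_mul]
  split_ifs <;> first | ring1 | (exfalso; first | omega | assumption)

lemma blast (hn : 4 ≤ n) (i : Fin n) (hi : i.val = n - 1) (m : Fin n → ℂ) :
    bilin n (cNn n) (eV n i) m = 0 := by
  funext k
  rw [bcoord hn]
  simp only [eV, Pi.single_apply, Fin.ext_iff, Pi.zero_apply]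
  split_ifs <;> first | ring1 | (exfalso; first | omega | assumption)

lemma be1_coord (hn : 4 ≤ n) (m : Fin n → ℂ) (k : Fin n) :
    bilin n (cNn n) (eV n ⟨0, by omega⟩) m k
      = if h : 2 ≤ k.val then -m ⟨k.val-1, by omega⟩ else 0 := by
  rw [bcoord hn]
  simp only [eV, Pi.single_apply, Fin.ext_iff]
  split_ifs <;> first | ring1 | (exfalso; first | omega | assumption)

lemma be3_right (hn : 4 ≤ n) (m : Fin n → ℂ) :
    bilin n (cNn n) m (eV n ⟨2, by omega⟩)
      = (-(m ⟨0, by omega⟩)) • eV n ⟨3, by omega⟩ := by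
  funext k
  rw [bcoord hn]
  simp only [Pi.smul_apply, eV, Pi.single_apply, Fin.ext_iff, smul_eq_mul]
  split_ifs <;> first | ring1 | (exfalso; first | omega | assumption)

lemma square_in_top (hn : 4 ≤ n) (m : Fin n → ℂ)
    (h1 : bilin n (cNn n) (eV n ⟨0, by omega⟩) m = 0)
    (h2 : bilin n (cNn n) (eV n ⟨1, by omega⟩) m = 0) :
    m = m ⟨n-1, by omega⟩ • eV n ⟨n-1, by omega⟩ := by
  apply Vs_n_eq hn
  intro j hj
  rcases Nat.eq_zero_or_pos j.val with h0 | hpos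
  · -- use h2 : bilin e2 m = 0, coordinate 2
    have := congrFun h2 (⟨2, by omega⟩ : Fin n)
    rw [bsingle_left hn _ (show 1 ≤ 1 by omega) (show 1+1 < n by omega)] at this
    have h20 : m (⟨0, by omega⟩ : Fin n) = 0 := by
      simpa [eV_apply, Fin.ext_iff] using this
    have hj0 : j = (⟨0, by omega⟩ : Fin n) := Fin.ext (by simp [h0])
    rw [hj0]; exact h20
  · -- use h1, coordinate j+1
    have := congrFun h1 (⟨j.val + 1, by omega⟩ : Fin n)
    rw [be1_coord hn, dif_pos (by simp; omega)] at this
    simp only [Pi.zero_apply, neg_eq_zero] at this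
    have hj' : j = (⟨(⟨j.val + 1, by omega⟩ : Fin n).val - 1, by omega⟩ : Fin n) :=
      Fin.ext (by simp)
    rw [hj']; exact this
section Lside

variable {n : ℕ} {L : Type*} [AddCommGroup L] [Module ℂ L]
variable {b : L →ₗ[ℂ] L →ₗ[ℂ] L}

lemma sq_right_ann (hb : IsLeibniz b) (y x : L) : b y (b x x) = 0 := by
  rw [hb y x x]; exact sub_self _

lemma leib' (hb : IsLeibniz b) (x y z : L) :
    b (b x y) z = b x (b y z) + b (b x z) y := by
  rw [hb x y z]; abel

/-- span of all squares -/
noncomputable def sqSpan (b : L →ₗ[ℂ] L →ₗ[ℂ] L) : Submodule ℂ L :=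
  Submodule.span ℂ {s | ∃ x, s = b x x}

lemma polar_mem (x y : L) : b x y + b y x ∈ sqSpan b := by
  have h : b x y + b y x = b (x+y) (x+y) - b x x - b y y := by
    simp only [map_add, LinearMap.add_apply]; abel
  rw [h]
  exact sub_mem (sub_mem (Submodule.subset_span ⟨_, rfl⟩) (Submodule.subset_span ⟨_, rfl⟩))
    (Submodule.subset_span ⟨_, rfl⟩)

lemma sq_span_right_ann (hb : IsLeibniz b) (y : L) {a : L} (ha : a ∈ sqSpan b) :
    b y a = 0 := by
  have : sqSpan b ≤ LinearMap.ker (b y) := by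
    rw [sqSpan, Submodule.span_le]
    rintro s ⟨x, rfl⟩
    exact sq_right_ann hb y x
  exact this ha

lemma sqSpan_nilpotentIdeal (hb : IsLeibniz b) : IsNilpotentIdeal b (sqSpan b) := by
  constructor
  · intro a ha y
    constructor
    · -- b a y ∈ sqSpan b
      have : sqSpan b ≤ Submodule.comap (b.flip y) (sqSpan b) := by
        rw [sqSpan, Submodule.span_le]
        rintro s ⟨x, rfl⟩
        show b (b x x) y ∈ sqSpan b
        rw [leib' hb x x y]
        exact polar_mem x (b x y)
      exact this ha
    · rw [sq_span_right_ann hb y ha]; exact (sqSpan b).zero_mem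
  · exact ⟨1, by
      apply le_antisymm ?_ bot_le
      show bracketSpan b (sqSpan b) (sqSpan b) ≤ ⊥
      rw [bracketSpan, Submodule.span_le]
      rintro s ⟨x, -, y, hy, rfl⟩
      simp [sq_span_right_ann hb x hy]⟩

/-- the fundamental S-derivation identity -/
lemma S_der (hb : IsLeibniz b) (a c z : L) :
    b (b a c + b c a) z
      = (b a (b c z) + b (b c z) a) + (b c (b a z) + b (b a z) c) := by
  have h1 := leib' hb a c z
  have h2 := leib' hb c a z
  simp only [map_add, LinearMap.add_apply, h1, h2]
  abel

end Lside
section Dmach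

variable {n : ℕ} {L : Type*} [AddCommGroup L] [Module ℂ L]

/-- Right multiplication by `z`, transported to coordinates via `f`. -/
noncomputable def ddR (b : L →ₗ[ℂ] L →ₗ[ℂ] L) (f : (Fin n → ℂ) →ₗ[ℂ] L)
    (hinj : Function.Injective f) (hid : IsIdeal b (LinearMap.range f)) (z : L) :
    (Fin n → ℂ) →ₗ[ℂ] (Fin n → ℂ) :=
  (LinearEquiv.ofInjective f hinj).symm.toLinearMap ∘ₗ
    ((b.flip z).restrict (p := LinearMap.range f) (q := LinearMap.range f)
      (fun x hx => (hid x hx z).1)) ∘ₗ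
    (LinearEquiv.ofInjective f hinj).toLinearMap

lemma f_ddR {b : L →ₗ[ℂ] L →ₗ[ℂ] L} {f : (Fin n → ℂ) →ₗ[ℂ] L}
    (hinj : Function.Injective f) (hid : IsIdeal b (LinearMap.range f)) (z : L)
    (m : Fin n → ℂ) : f (ddR b f hinj hid z m) = b (f m) z := by
  have hcoe : ∀ u : LinearMap.range f, f ((LinearEquiv.ofInjective f hinj).symm u) = u := by
    intro u
    have h1 : ∀ v, ((LinearEquiv.ofInjective f hinj) v : L) = f v :=
      fun v => LinearEquiv.ofInjective_apply f v
    rw [← h1 ((LinearEquiv.ofInjective f hinj).symm u), LinearEquiv.apply_symm_apply]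
  simp only [ddR, LinearMap.coe_comp, Function.comp_apply, LinearEquiv.coe_coe, hcoe,
    LinearMap.restrict_apply, LinearMap.flip_apply, LinearEquiv.ofInjective_apply]
  rfl

end Dmach
section Main

variable {n : ℕ} {L : Type*} [AddCommGroup L] [Module ℂ L]
variable {b : L →ₗ[ℂ] L →ₗ[ℂ] L} {f : (Fin n → ℂ) →ₗ[ℂ] L}

lemma eV_val {i j : Fin n} : eV n i j = if j.val = i.val then 1 else 0 := by
  rw [eV_apply]; simp [Fin.ext_iff]

lemma eV_eq {i j : Fin n} (h : i.val = j.val) : eV n i = eV n j := by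
  rw [show i = j from Fin.ext h]

lemma dd_bilin (hb : IsLeibniz b) (hinj : Function.Injective f)
    (hid : IsIdeal b (LinearMap.range f))
    (hmorph : ∀ x y, f (bilin n (cNn n) x y) = b (f x) (f y))
    (z : L) (m m' : Fin n → ℂ) :
    ddR b f hinj hid z (bilin n (cNn n) m m')
      = bilin n (cNn n) (ddR b f hinj hid z m) m'
        + bilin n (cNn n) m (ddR b f hinj hid z m') := by
  apply hinj
  simp only [map_add, f_ddR hinj hid, hmorph]
  rw [leib' hb]
  abel

lemma dd_bracket (hb : IsLeibniz b) (hinj : Function.Injective f)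
    (hid : IsIdeal b (LinearMap.range f)) (z z' : L) (m : Fin n → ℂ) :
    ddR b f hinj hid (b z z') m
      = ddR b f hinj hid z' (ddR b f hinj hid z m)
        - ddR b f hinj hid z (ddR b f hinj hid z' m) := by
  apply hinj
  simp only [map_sub, f_ddR hinj hid]
  exact hb (f m) z z'

lemma dd_N (hinj : Function.Injective f) (hid : IsIdeal b (LinearMap.range f))
    (hmorph : ∀ x y, f (bilin n (cNn n) x y) = b (f x) (f y))
    (m0 m : Fin n → ℂ) :
    ddR b f hinj hid (f m0) m = bilin n (cNn n) m m0 := by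
  apply hinj
  rw [f_ddR hinj hid, ← hmorph]

/-- the coordinate functionals z ↦ (d_z e_i)_j, as linear maps. -/
noncomputable def phiF (hinj : Function.Injective f)
    (hid : IsIdeal b (LinearMap.range f)) (i j : Fin n) : L →ₗ[ℂ] ℂ where
  toFun z := ddR b f hinj hid z (eV n i) j
  map_add' z z' := by
    have h : ddR b f hinj hid (z + z') (eV n i)
        = ddR b f hinj hid z (eV n i) + ddR b f hinj hid z' (eV n i) := by
      apply hinj
      simp only [map_add, f_ddR hinj hid]
    show ddR b f hinj hid (z + z') (eV n i) j = _
    rw [h]; rfl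
  map_smul' c z := by
    have h : ddR b f hinj hid (c • z) (eV n i)
        = c • ddR b f hinj hid z (eV n i) := by
      apply hinj
      simp only [map_smul, f_ddR hinj hid]
    show ddR b f hinj hid (c • z) (eV n i) j = _
    rw [h]; rfl

lemma phiF_apply (hinj : Function.Injective f) (hid : IsIdeal b (LinearMap.range f))
    {i j : Fin n} (z : L) :
    phiF hinj hid i j z = ddR b f hinj hid z (eV n i) j := rfl

end Main
section Rec

variable {n : ℕ} {L : Type*} [AddCommGroup L] [Module ℂ L]
variable {b : L →ₗ[ℂ] L →ₗ[ℂ] L} {f : (Fin n → ℂ) →ₗ[ℂ] L}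

lemma Ck (hn : 4 ≤ n) (hb : IsLeibniz b) (hinj : Function.Injective f)
    (hid : IsIdeal b (LinearMap.range f))
    (hmorph : ∀ x y, f (bilin n (cNn n) x y) = b (f x) (f y)) (z : L) :
    ∀ (k : ℕ) (h1 : 1 ≤ k) (hk : k < n),
      ddR b f hinj hid z (eV n ⟨k, hk⟩) ∈ Vs n (k+1) ∧
      ddR b f hinj hid z (eV n ⟨k, hk⟩) ⟨k, hk⟩
        = phiF hinj hid ⟨1, by omega⟩ ⟨1, by omega⟩ z
          + ((k:ℂ) - 1) * phiF hinj hid ⟨0, by omega⟩ ⟨0, by omega⟩ z := by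
  intro k h1
  induction k, h1 using Nat.le_induction with
  | base =>
    intro hk
    have hT2 : ddR b f hinj hid z (eV n ⟨1, hk⟩) ⟨0, by omega⟩ = 0 := by
      have h23 : bilin n (cNn n) (eV n ⟨1, hk⟩) (eV n ⟨2, by omega⟩) = 0 := by
        rw [bsingle_left hn ⟨1, hk⟩ (show (1:ℕ) ≤ 1 from le_refl 1) (show 1+1 < n by omega)]
        rw [show (eV n ⟨2, by omega⟩) (⟨0, by omega⟩ : Fin n) = 0 from by
          simp [eV_val]]
        rw [zero_smul]
      have h0 := dd_bilin hb hinj hid hmorph z (eV n ⟨1, hk⟩) (eV n ⟨2, by omega⟩)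
      rw [h23, map_zero] at h0
      rw [be3_right hn, bsingle_left hn ⟨1, hk⟩ (show (1:ℕ) ≤ 1 from le_refl 1) (show 1+1 < n by omega)] at h0
      have h30 : ddR b f hinj hid z (eV n ⟨2, by omega⟩) ⟨0, by omega⟩ = 0 := by
        have he3 : eV n (⟨2, by omega⟩ : Fin n)
            = bilin n (cNn n) (eV n ⟨1, hk⟩) (eV n ⟨0, by omega⟩) := by
          rw [bsingle_left hn ⟨1, hk⟩ (show (1:ℕ) ≤ 1 from le_refl 1) (show 1+1 < n by omega)]
          rw [show (eV n (⟨0, by omega⟩ : Fin n)) (⟨0, by omega⟩ : Fin n) = 1 from by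
            simp [eV_val]]
          rw [one_smul]
          try exact eV_eq (by simp)
        rw [he3, dd_bilin hb hinj hid hmorph, Pi.add_apply]
        rw [mem_Vs.mp (bV3 hn _ _) ⟨0, by omega⟩ (by norm_num)]
        rw [mem_Vs.mp (bV3 hn _ _) ⟨0, by omega⟩ (by norm_num)]
        norm_num
      have h03 := congrFun h0 (⟨3, by omega⟩ : Fin n)
      rw [h30] at h03
      simp only [Pi.add_apply, Pi.smul_apply, Pi.zero_apply, eV_val, smul_eq_mul] at h03
      rw [if_pos (by simp), if_neg (by simp)] at h03
      linear_combination h03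
    constructor
    · intro j hj
      have hj0 : j = (⟨0, by omega⟩ : Fin n) := Fin.ext (by simp; omega)
      rw [hj0]; exact hT2
    · simp only [phiF_apply hinj hid]
      push_cast
      ring
  | succ k hk1 ih =>
    intro hks
    have hkn : k < n := by omega
    obtain ⟨ihm, ihc⟩ := ih hkn
    have hrec : eV n (⟨k+1, hks⟩ : Fin n)
        = bilin n (cNn n) (eV n ⟨k, hkn⟩) (eV n ⟨0, by omega⟩) := by
      rw [bsingle_left hn ⟨k, hkn⟩ (by simpa using hk1) (show k+1 < n from hks)]
      rw [show (eV n (⟨0, by omega⟩ : Fin n)) (⟨0, by omega⟩ : Fin n) = 1 from by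
        simp [eV_val]]
      rw [one_smul]
      try exact eV_eq (by simp)
    have hd := dd_bilin hb hinj hid hmorph z (eV n ⟨k, hkn⟩) (eV n ⟨0, by omega⟩)
    have hsec : bilin n (cNn n) (eV n ⟨k, hkn⟩) (ddR b f hinj hid z (eV n ⟨0, by omega⟩))
        = (ddR b f hinj hid z (eV n ⟨0, by omega⟩) ⟨0, by omega⟩) • eV n ⟨k+1, hks⟩ := by
      rw [bsingle_left hn ⟨k, hkn⟩ (by simpa using hk1) (show k+1 < n from hks)]
    constructor
    · rw [hrec, hd, hsec]
      apply add_mem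
      · exact Vs_antitone (by omega) (bVk hn (show 2 ≤ k+1 by omega) ihm _)
      · exact Submodule.smul_mem _ _ (eV_mem_Vs _ (by simp))
    · rw [hrec, hd, hsec, Pi.add_apply]
      have hc1 : bilin n (cNn n) (ddR b f hinj hid z (eV n ⟨k, hkn⟩)) (eV n ⟨0, by omega⟩)
          (⟨k+1, hks⟩ : Fin n) = ddR b f hinj hid z (eV n ⟨k, hkn⟩) ⟨k, hkn⟩ := by
        rw [bcoord hn, dif_pos (show 2 ≤ k+1 by omega)]
        rw [mem_Vs.mp ihm ⟨0, by omega⟩ (by simp; omega)]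
        rw [show (eV n (⟨0, by omega⟩ : Fin n)) (⟨0, by omega⟩ : Fin n) = 1 from by
          simp [eV_val]]
        rw [show (eV n (⟨0, by omega⟩ : Fin n)) (⟨k+1-1, by omega⟩ : Fin n) = 0 from by
          simp [eV_val]; omega]
        rw [show (⟨k+1-1, by omega⟩ : Fin n) = (⟨k, hkn⟩ : Fin n) from Fin.ext (by simp)]
        ring
      rw [hc1, ihc]
      rw [Pi.smul_apply, eV_val, if_pos (by simp), smul_eq_mul, mul_one]
      simp only [phiF_apply hinj hid]
      push_cast
      ring

end Rec
section Cons

variable {n : ℕ} {L : Type*} [AddCommGroup L] [Module ℂ L]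
variable {b : L →ₗ[ℂ] L →ₗ[ℂ] L} {f : (Fin n → ℂ) →ₗ[ℂ] L}

lemma smul_eV (j : Fin n) (c : ℂ) : c • eV n j = Pi.single j c := by
  funext i
  simp only [Pi.smul_apply, eV_apply, Pi.single_apply, smul_eq_mul]
  split_ifs <;> simp

lemma dd_decomp (hinj : Function.Injective f) (hid : IsIdeal b (LinearMap.range f))
    (z : L) (m : Fin n → ℂ) :
    ddR b f hinj hid z m = ∑ j, m j • ddR b f hinj hid z (eV n j) := by
  conv_lhs => rw [← Finset.univ_sum_single m]
  rw [map_sum]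
  congr 1
  funext j
  rw [← smul_eV, map_smul]

lemma dd_eV (hn : 4 ≤ n) (hb : IsLeibniz b) (hinj : Function.Injective f)
    (hid : IsIdeal b (LinearMap.range f))
    (hmorph : ∀ x y, f (bilin n (cNn n) x y) = b (f x) (f y))
    (z : L) (j : Fin n) (hj : 1 ≤ j.val) :
    ddR b f hinj hid z (eV n j) ∈ Vs n (j.val+1) ∧
    ddR b f hinj hid z (eV n j) j
      = phiF hinj hid ⟨1, by omega⟩ ⟨1, by omega⟩ z
        + ((j.val:ℂ) - 1) * phiF hinj hid ⟨0, by omega⟩ ⟨0, by omega⟩ z := by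
  have h := Ck hn hb hinj hid hmorph z j.val hj j.isLt
  rwa [show (⟨j.val, j.isLt⟩ : Fin n) = j from Fin.ext rfl] at h

lemma dd_mem_Vs (hn : 4 ≤ n) (hb : IsLeibniz b) (hinj : Function.Injective f)
    (hid : IsIdeal b (LinearMap.range f))
    (hmorph : ∀ x y, f (bilin n (cNn n) x y) = b (f x) (f y))
    (z : L) {k : ℕ} (h2 : 2 ≤ k) {m : Fin n → ℂ} (hm : m ∈ Vs n k) :
    ddR b f hinj hid z m ∈ Vs n k := by
  rw [dd_decomp hinj hid]
  apply Submodule.sum_mem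
  intro j _
  by_cases hj : m j = 0
  · rw [hj, zero_smul]; exact Submodule.zero_mem _
  · have hjk : k ≤ j.val + 1 := by
      by_contra hc
      exact hj (mem_Vs.mp hm j (by omega))
    have hj1 : 1 ≤ j.val := by omega
    exact Submodule.smul_mem _ _
      (Vs_antitone hjk ((dd_eV hn hb hinj hid hmorph z j hj1).1))

lemma dd_mem_V2 (hn : 4 ≤ n) (hb : IsLeibniz b) (hinj : Function.Injective f)
    (hid : IsIdeal b (LinearMap.range f))
    (hmorph : ∀ x y, f (bilin n (cNn n) x y) = b (f x) (f y))
    (z : L) (hz : phiF hinj hid ⟨0, by omega⟩ ⟨0, by omega⟩ z = 0) (m : Fin n → ℂ) :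
    ddR b f hinj hid z m ∈ Vs n 2 := by
  rw [dd_decomp hinj hid]
  apply Submodule.sum_mem
  intro j _
  apply Submodule.smul_mem
  rcases Nat.eq_zero_or_pos j.val with h0 | h1
  · have hj0 : j = (⟨0, by omega⟩ : Fin n) := Fin.ext (by simp [h0])
    intro i hi
    have hi0 : i = (⟨0, by omega⟩ : Fin n) := Fin.ext (by simp; omega)
    rw [hj0, hi0]
    exact hz
  · exact Vs_antitone (by omega) ((dd_eV hn hb hinj hid hmorph z j h1).1)

lemma dd_mem_Vs_succ (hn : 4 ≤ n) (hb : IsLeibniz b) (hinj : Function.Injective f)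
    (hid : IsIdeal b (LinearMap.range f))
    (hmorph : ∀ x y, f (bilin n (cNn n) x y) = b (f x) (f y))
    (z : L) (hz1 : phiF hinj hid ⟨0, by omega⟩ ⟨0, by omega⟩ z = 0)
    (hz2 : phiF hinj hid ⟨1, by omega⟩ ⟨1, by omega⟩ z = 0)
    {k : ℕ} (h2 : 2 ≤ k) {m : Fin n → ℂ} (hm : m ∈ Vs n k) :
    ddR b f hinj hid z m ∈ Vs n (k+1) := by
  rw [dd_decomp hinj hid]
  apply Submodule.sum_mem
  intro j _
  by_cases hj : m j = 0
  · rw [hj, zero_smul]; exact Submodule.zero_mem _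
  · have hjk : k ≤ j.val + 1 := by
      by_contra hc
      exact hj (mem_Vs.mp hm j (by omega))
    have hj1 : 1 ≤ j.val := by omega
    obtain ⟨hmem, hcoord⟩ := dd_eV hn hb hinj hid hmorph z j hj1
    apply Submodule.smul_mem
    have hstep : ddR b f hinj hid z (eV n j) ∈ Vs n (j.val+2) := by
      apply mem_Vs_succ (by omega) (by omega) hmem
      rw [show (⟨j.val+1-1, by omega⟩ : Fin n) = j from Fin.ext (by simp)]
      rw [hcoord, hz1, hz2]
      ring
    exact Vs_antitone (by omega) hstep

lemma a1_N (hn : 4 ≤ n) (hinj : Function.Injective f)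
    (hid : IsIdeal b (LinearMap.range f))
    (hmorph : ∀ x y, f (bilin n (cNn n) x y) = b (f x) (f y)) (m0 : Fin n → ℂ) :
    phiF hinj hid ⟨0, by omega⟩ ⟨0, by omega⟩ (f m0) = 0 := by
  rw [phiF_apply, dd_N hinj hid hmorph]
  exact mem_Vs.mp (bV3 hn _ _) _ (by norm_num)

lemma mu2_N (hn : 4 ≤ n) (hinj : Function.Injective f)
    (hid : IsIdeal b (LinearMap.range f))
    (hmorph : ∀ x y, f (bilin n (cNn n) x y) = b (f x) (f y)) (m0 : Fin n → ℂ) :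
    phiF hinj hid ⟨1, by omega⟩ ⟨1, by omega⟩ (f m0) = 0 := by
  rw [phiF_apply, dd_N hinj hid hmorph]
  rw [bsingle_left hn ⟨1, by omega⟩ (le_refl 1) (show 1+1 < n by omega)]
  rw [Pi.smul_apply, eV_val]
  simp

lemma cross_a1 (hn : 4 ≤ n) (hb : IsLeibniz b) (hinj : Function.Injective f)
    (hid : IsIdeal b (LinearMap.range f))
    (hmorph : ∀ x y, f (bilin n (cNn n) x y) = b (f x) (f y)) (u w : L) :
    ddR b f hinj hid w (ddR b f hinj hid u (eV n ⟨0, by omega⟩)) ⟨0, by omega⟩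
      = phiF hinj hid ⟨0, by omega⟩ ⟨0, by omega⟩ u
        * phiF hinj hid ⟨0, by omega⟩ ⟨0, by omega⟩ w := by
  set a1u := phiF hinj hid (⟨0, by omega⟩ : Fin n) ⟨0, by omega⟩ u with ha1u
  have hr : ddR b f hinj hid u (eV n ⟨0, by omega⟩) - a1u • eV n ⟨0, by omega⟩ ∈ Vs n 2 := by
    intro i hi
    have hi0 : i = (⟨0, by omega⟩ : Fin n) := Fin.ext (by simp; omega)
    rw [hi0, Pi.sub_apply, Pi.smul_apply, eV_val, if_pos rfl, smul_eq_mul, mul_one]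
    rw [ha1u, phiF_apply]
    ring
  have hsplit : ddR b f hinj hid u (eV n ⟨0, by omega⟩)
      = a1u • eV n ⟨0, by omega⟩
        + (ddR b f hinj hid u (eV n ⟨0, by omega⟩) - a1u • eV n ⟨0, by omega⟩) := by
    abel
  rw [hsplit, map_add, map_smul, Pi.add_apply, Pi.smul_apply, smul_eq_mul]
  rw [mem_Vs.mp (dd_mem_Vs hn hb hinj hid hmorph w (le_refl 2) hr) _ (by norm_num)]
  rw [phiF_apply]
  ring

lemma cross_mu2 (hn : 4 ≤ n) (hb : IsLeibniz b) (hinj : Function.Injective f)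
    (hid : IsIdeal b (LinearMap.range f))
    (hmorph : ∀ x y, f (bilin n (cNn n) x y) = b (f x) (f y)) (u w : L) :
    ddR b f hinj hid w (ddR b f hinj hid u (eV n ⟨1, by omega⟩)) ⟨1, by omega⟩
      = phiF hinj hid ⟨1, by omega⟩ ⟨1, by omega⟩ u
        * phiF hinj hid ⟨1, by omega⟩ ⟨1, by omega⟩ w := by
  set mu := phiF hinj hid (⟨1, by omega⟩ : Fin n) ⟨1, by omega⟩ u with hmu
  have hmem2 := (dd_eV hn hb hinj hid hmorph u ⟨1, by omega⟩ (by norm_num)).1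
  have hr : ddR b f hinj hid u (eV n ⟨1, by omega⟩) - mu • eV n ⟨1, by omega⟩ ∈ Vs n 3 := by
    intro i hi
    rw [Pi.sub_apply, Pi.smul_apply, eV_val, smul_eq_mul]
    rcases Nat.eq_zero_or_pos i.val with h0 | h1
    · rw [if_neg (show ¬(i.val = 1) by omega), mul_zero, sub_zero]
      exact mem_Vs.mp hmem2 i (show i.val + 1 < 1 + 1 by omega)
    · have hi1 : i = (⟨1, by omega⟩ : Fin n) := Fin.ext (by simp; omega)
      rw [hi1]
      rw [if_pos rfl, mul_one, hmu, phiF_apply]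
      ring
  have hsplit : ddR b f hinj hid u (eV n ⟨1, by omega⟩)
      = mu • eV n ⟨1, by omega⟩
        + (ddR b f hinj hid u (eV n ⟨1, by omega⟩) - mu • eV n ⟨1, by omega⟩) := by
    abel
  rw [hsplit, map_add, map_smul, Pi.add_apply, Pi.smul_apply, smul_eq_mul]
  rw [mem_Vs.mp (dd_mem_Vs hn hb hinj hid hmorph w (by norm_num) hr) _ (by norm_num)]
  rw [phiF_apply]
  ring

lemma a1_bracket (hn : 4 ≤ n) (hb : IsLeibniz b) (hinj : Function.Injective f)
    (hid : IsIdeal b (LinearMap.range f))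
    (hmorph : ∀ x y, f (bilin n (cNn n) x y) = b (f x) (f y)) (z z' : L) :
    phiF hinj hid ⟨0, by omega⟩ ⟨0, by omega⟩ (b z z') = 0 := by
  rw [phiF_apply, dd_bracket hb hinj hid, Pi.sub_apply]
  rw [cross_a1 hn hb hinj hid hmorph, cross_a1 hn hb hinj hid hmorph]
  ring

lemma mu2_bracket (hn : 4 ≤ n) (hb : IsLeibniz b) (hinj : Function.Injective f)
    (hid : IsIdeal b (LinearMap.range f))
    (hmorph : ∀ x y, f (bilin n (cNn n) x y) = b (f x) (f y)) (z z' : L) :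
    phiF hinj hid ⟨1, by omega⟩ ⟨1, by omega⟩ (b z z') = 0 := by
  rw [phiF_apply, dd_bracket hb hinj hid, Pi.sub_apply]
  rw [cross_mu2 hn hb hinj hid hmorph, cross_mu2 hn hb hinj hid hmorph]
  ring

end Cons
section Sq

variable {n : ℕ} {L : Type*} [AddCommGroup L] [Module ℂ L]
variable {b : L →ₗ[ℂ] L →ₗ[ℂ] L} {f : (Fin n → ℂ) →ₗ[ℂ] L}

lemma square_mem_range (hb : IsLeibniz b)
    (hmax : ∀ J, IsNilpotentIdeal b J → J ≤ LinearMap.range f) (z : L) :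
    b z z ∈ LinearMap.range f :=
  hmax _ (sqSpan_nilpotentIdeal hb) (Submodule.subset_span ⟨z, rfl⟩)

lemma square_mem_En (hn : 4 ≤ n) (hb : IsLeibniz b) (hinj : Function.Injective f)
    (hmorph : ∀ x y, f (bilin n (cNn n) x y) = b (f x) (f y))
    (hmax : ∀ J, IsNilpotentIdeal b J → J ≤ LinearMap.range f) (z : L) :
    b z z ∈ ℂ ∙ (f (eV n ⟨n-1, by omega⟩)) := by
  obtain ⟨m, hm⟩ := square_mem_range hb hmax z
  have h1 : bilin n (cNn n) (eV n ⟨0, by omega⟩) m = 0 := by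
    apply hinj
    rw [hmorph, hm, map_zero]
    exact sq_right_ann hb _ z
  have h2 : bilin n (cNn n) (eV n ⟨1, by omega⟩) m = 0 := by
    apply hinj
    rw [hmorph, hm, map_zero]
    exact sq_right_ann hb _ z
  rw [← hm, square_in_top hn m h1 h2, map_smul]
  exact Submodule.smul_mem _ _ (Submodule.mem_span_singleton_self _)

lemma polar_mem_En (hn : 4 ≤ n) (hb : IsLeibniz b) (hinj : Function.Injective f)
    (hmorph : ∀ x y, f (bilin n (cNn n) x y) = b (f x) (f y))
    (hmax : ∀ J, IsNilpotentIdeal b J → J ≤ LinearMap.range f) (x y : L) :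
    b x y + b y x ∈ ℂ ∙ (f (eV n ⟨n-1, by omega⟩)) := by
  have hle : sqSpan b ≤ ℂ ∙ (f (eV n ⟨n-1, by omega⟩)) := by
    rw [sqSpan, Submodule.span_le]
    rintro s ⟨x, rfl⟩
    exact square_mem_En hn hb hinj hmorph hmax x
  exact hle (polar_mem x y)

lemma En_ann (hn : 4 ≤ n) (hb : IsLeibniz b) (hinj : Function.Injective f)
    (hmorph : ∀ x y, f (bilin n (cNn n) x y) = b (f x) (f y))
    (hmax : ∀ J, IsNilpotentIdeal b J → J ≤ LinearMap.range f)
    (hnl : ∃ x : L, b x x ≠ 0) (y : L) :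
    b y (f (eV n ⟨n-1, by omega⟩)) = 0 := by
  obtain ⟨z0, hz0⟩ := hnl
  obtain ⟨κ, hκ⟩ := Submodule.mem_span_singleton.mp
    (square_mem_En hn hb hinj hmorph hmax z0)
  have hκ0 : κ ≠ 0 := by
    rintro rfl
    rw [zero_smul] at hκ
    exact hz0 hκ.symm
  have h0 := sq_right_ann hb y z0
  rw [← hκ, map_smul, smul_eq_zero] at h0
  exact h0.resolve_left hκ0

lemma lemmaM (hn : 4 ≤ n) (hb : IsLeibniz b) (hinj : Function.Injective f)
    (hid : IsIdeal b (LinearMap.range f))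
    (hmorph : ∀ x y, f (bilin n (cNn n) x y) = b (f x) (f y))
    (hmax : ∀ J, IsNilpotentIdeal b J → J ≤ LinearMap.range f)
    (w : L) (hw1 : phiF hinj hid ⟨0, by omega⟩ ⟨0, by omega⟩ w = 0)
    (hw2 : phiF hinj hid ⟨1, by omega⟩ ⟨1, by omega⟩ w = 0)
    (hLL : bracketSpan b ⊤ ⊤ ≤ LinearMap.range f ⊔ ℂ ∙ w) :
    w ∈ LinearMap.range f := by
  set J := LinearMap.range f ⊔ ℂ ∙ w with hJ
  have hEn2 : ∀ k : ℕ, k ≤ n → (ℂ ∙ (f (eV n ⟨n-1, by omega⟩))) ≤ Submodule.map f (Vs n k) := by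
    intro k hk
    rw [Submodule.span_singleton_le_iff_mem]
    exact ⟨eV n ⟨n-1, by omega⟩, eV_mem_Vs _ (by simp; omega), rfl⟩
  have hJid : IsIdeal b J := by
    intro a _ y
    exact ⟨hLL (Submodule.subset_span ⟨a, Submodule.mem_top, y, Submodule.mem_top, rfl⟩),
      hLL (Submodule.subset_span ⟨y, Submodule.mem_top, a, Submodule.mem_top, rfl⟩)⟩
  have hWmap : ∀ k, 1 ≤ k → idealLCS b J k ≤ Submodule.map f (Vs n (k+1)) := by
    intro k hk
    induction k, hk using Nat.le_induction with
    | base =>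
      show bracketSpan b (idealLCS b J 0) J ≤ _
      rw [show idealLCS b J 0 = J from rfl, bracketSpan, Submodule.span_le]
      rintro s ⟨p, hp, q, hq, rfl⟩
      obtain ⟨u, hu, v, hv, rfl⟩ := Submodule.mem_sup.mp hp
      obtain ⟨t, rfl⟩ := Submodule.mem_span_singleton.mp hv
      obtain ⟨u', hu', v', hv', rfl⟩ := Submodule.mem_sup.mp hq
      obtain ⟨t', rfl⟩ := Submodule.mem_span_singleton.mp hv'
      obtain ⟨m, rfl⟩ := hu
      obtain ⟨m', rfl⟩ := hu'
      have hexp : b (f m + t • w) (f m' + t' • w)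
          = ((b (f m) (f m') + t' • b (f m) w) + t • b w (f m')) + (t' * t) • b w w := by
        simp only [map_add, map_smul, LinearMap.add_apply, LinearMap.smul_apply, smul_add,
          smul_smul]
        abel
      rw [hexp]
      refine add_mem (add_mem (add_mem ?_ ?_) ?_) ?_
      · exact ⟨bilin n (cNn n) m m', Vs_antitone (by omega) (bV3 hn m m'),
          hmorph m m'⟩
      · refine Submodule.smul_mem _ _ ?_
        exact ⟨ddR b f hinj hid w m, dd_mem_V2 hn hb hinj hid hmorph w hw1 m,
          f_ddR hinj hid w m⟩
      · refine Submodule.smul_mem _ _ ?_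
        have hrw : b w (f m') = (b w (f m') + b (f m') w) - b (f m') w := by abel
        rw [hrw]
        refine sub_mem (hEn2 2 (by omega) (polar_mem_En hn hb hinj hmorph hmax w (f m'))) ?_
        exact ⟨ddR b f hinj hid w m', dd_mem_V2 hn hb hinj hid hmorph w hw1 m',
          f_ddR hinj hid w m'⟩
      · exact Submodule.smul_mem _ _
          (hEn2 2 (by omega) (square_mem_En hn hb hinj hmorph hmax w))
    | succ k hk1 ih =>
      show bracketSpan b (idealLCS b J k) J ≤ _
      rw [bracketSpan, Submodule.span_le]
      rintro s ⟨p, hp, q, hq, rfl⟩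
      obtain ⟨m, hm, rfl⟩ := ih hp
      obtain ⟨u', hu', v', hv', rfl⟩ := Submodule.mem_sup.mp hq
      obtain ⟨t', rfl⟩ := Submodule.mem_span_singleton.mp hv'
      obtain ⟨m', rfl⟩ := hu'
      have hexp : b (f m) (f m' + t' • w) = b (f m) (f m') + t' • b (f m) w := by
        simp only [map_add, map_smul]
      rw [hexp]
      refine add_mem ?_ (Submodule.smul_mem _ _ ?_)
      · exact ⟨bilin n (cNn n) m m', bVk hn (by omega) hm m', hmorph m m'⟩
      · exact ⟨ddR b f hinj hid w m,
          dd_mem_Vs_succ hn hb hinj hid hmorph w hw1 hw2 (by omega) hm,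
          f_ddR hinj hid w m⟩
  have hnilJ : idealLCS b J n = ⊥ := by
    apply le_antisymm ?_ bot_le
    refine le_trans (hWmap n (by omega)) ?_
    rw [Vs_np1, Submodule.map_bot]
  have hle := hmax J ⟨hJid, n, hnilJ⟩
  exact hle (Submodule.mem_sup_right (Submodule.mem_span_singleton_self w))

end Sq
section Solv

variable {n : ℕ} {L : Type*} [AddCommGroup L] [Module ℂ L]
variable {b : L →ₗ[ℂ] L →ₗ[ℂ] L} {f : (Fin n → ℂ) →ₗ[ℂ] L}

lemma finrank_range_f [FiniteDimensional ℂ L] (hinj : Function.Injective f) :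
    finrank ℂ (LinearMap.range f) = n := by
  rw [LinearMap.finrank_range_of_inj hinj]
  simp

lemma Lam_ne_top [FiniteDimensional ℂ L] (hn : 4 ≤ n) (hinj : Function.Injective f)
    (hid : IsIdeal b (LinearMap.range f)) (hsolv : IsSolvableAlg b)
    (hdim : finrank ℂ L = n + 2) :
    bracketSpan b ⊤ ⊤ ⊔ LinearMap.range f ≠ ⊤ := by
  intro hLam
  have hstep : ∀ D : Submodule ℂ L, D ⊔ LinearMap.range f = ⊤ →
      bracketSpan b D D ⊔ LinearMap.range f = ⊤ := by
    intro D hD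
    have h1 : bracketSpan b ⊤ ⊤ ≤ bracketSpan b D D ⊔ LinearMap.range f := by
      rw [bracketSpan, Submodule.span_le]
      rintro s ⟨x, -, y, -, rfl⟩
      have hx : x ∈ D ⊔ LinearMap.range f := by rw [hD]; exact Submodule.mem_top
      have hy : y ∈ D ⊔ LinearMap.range f := by rw [hD]; exact Submodule.mem_top
      obtain ⟨d, hd, u, hu, rfl⟩ := Submodule.mem_sup.mp hx
      obtain ⟨d', hd', u', hu', rfl⟩ := Submodule.mem_sup.mp hy
      have hexp : b (d + u) (d' + u') = b d d' + (b d u' + (b u d' + b u u')) := by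
        simp only [map_add, LinearMap.add_apply]
        abel
      rw [hexp]
      refine add_mem (Submodule.mem_sup_left ?_) (add_mem (Submodule.mem_sup_right ?_)
        (add_mem (Submodule.mem_sup_right ?_) (Submodule.mem_sup_right ?_)))
      · exact Submodule.subset_span ⟨d, hd, d', hd', rfl⟩
      · exact (hid u' hu' d).2
      · exact (hid u hu d').1
      · exact (hid u hu u').1
    rw [eq_top_iff, ← hLam]
    exact sup_le (le_trans h1 le_rfl) le_sup_right
  have hDs : ∀ s, derSeries b s ⊔ LinearMap.range f = ⊤ := by
    intro s
    induction s with
    | zero => rw [show derSeries b 0 = ⊤ from rfl, top_sup_eq]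
    | succ s ih => exact hstep _ ih
  obtain ⟨s, hs⟩ := hsolv
  have htop := hDs s
  rw [hs, bot_sup_eq] at htop
  have hfr : finrank ℂ (LinearMap.range f) = n := finrank_range_f hinj
  rw [htop, finrank_top, hdim] at hfr
  omega

end Solv

end St9

set_option maxHeartbeats 1000000 in
open St9 in
theorem statement9 (n : ℕ) (hn : 4 ≤ n) {L : Type*}
    [AddCommGroup L] [Module ℂ L] [FiniteDimensional ℂ L]
    (b : L →ₗ[ℂ] L →ₗ[ℂ] L) (hb : IsLeibniz b)
    (hsolv : IsSolvableAlg b) (hnonlie : ∃ x : L, b x x ≠ 0)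
    (hdim : Module.finrank ℂ L = n + 2)
    (hnil : NilradicalIso b (bilin n (cNn n))) :
    False := by
  obtain ⟨I0, hNR, f, hinj, hrange, hmorph⟩ := hnil
  subst hrange
  obtain ⟨⟨hid, -⟩, hmax⟩ := hNR
  by_cases hcase : ∃ X : L,
      phiF hinj hid ⟨1, by omega⟩ ⟨1, by omega⟩ X
        + ((n:ℂ) - 2) * phiF hinj hid ⟨0, by omega⟩ ⟨0, by omega⟩ X ≠ 0
  · obtain ⟨X, hX⟩ := hcase
    set t := phiF hinj hid (⟨1, by omega⟩ : Fin n) ⟨1, by omega⟩ X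
        + ((n:ℂ) - 2) * phiF hinj hid (⟨0, by omega⟩ : Fin n) ⟨0, by omega⟩ X with ht
    obtain ⟨hmemn, hcoordn⟩ := dd_eV hn hb hinj hid hmorph X ⟨n-1, by omega⟩ (by simp; omega)
    rw [show ((⟨n-1, by omega⟩ : Fin n)).val + 1 = n from by simp; omega] at hmemn
    have hdXn : ddR b f hinj hid X (eV n ⟨n-1, by omega⟩) = t • eV n ⟨n-1, by omega⟩ := by
      have hv := Vs_n_eq hn hmemn
      rw [hv, hcoordn]
      congr 1
      have hc : ((((⟨n-1, by omega⟩ : Fin n)).val : ℂ)) = (n:ℂ) - 1 := by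
        rw [show ((⟨n-1, by omega⟩ : Fin n)).val = n-1 from rfl, Nat.cast_sub (by omega),
          Nat.cast_one]
      rw [hc, ht]; ring
    have hXEn : b X (f (eV n ⟨n-1, by omega⟩)) = 0 :=
      En_ann hn hb hinj hmorph hmax hnonlie X
    have hEnX : b (f (eV n ⟨n-1, by omega⟩)) X = t • f (eV n ⟨n-1, by omega⟩) := by
      rw [← f_ddR hinj hid X (eV n ⟨n-1, by omega⟩), hdXn, map_smul]
    have hE9E1 : b (f (eV n ⟨n-2, by omega⟩)) (f (eV n ⟨0, by omega⟩))
        = f (eV n ⟨n-1, by omega⟩) := by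
      rw [← hmorph, bsingle_left hn ⟨n-2, by omega⟩ (by simp; omega) (by simp; omega)]
      rw [show (eV n (⟨0, by omega⟩ : Fin n)) (⟨0, by omega⟩ : Fin n) = 1 from by simp [eV_val]]
      rw [one_smul]
      congr 1
      exact eV_eq (by simp; omega)
    have hXE1 : ∃ m' : Fin n → ℂ, b X (f (eV n ⟨0, by omega⟩)) = f m' := by
      obtain ⟨τ, hτ⟩ := Submodule.mem_span_singleton.mp
        (polar_mem_En hn hb hinj hmorph hmax X (f (eV n ⟨0, by omega⟩)))
      refine ⟨τ • eV n ⟨n-1, by omega⟩ - ddR b f hinj hid X (eV n ⟨0, by omega⟩), ?_⟩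
      rw [map_sub, map_smul, f_ddR hinj hid]
      calc b X (f (eV n ⟨0, by omega⟩))
          = (b X (f (eV n ⟨0, by omega⟩)) + b (f (eV n ⟨0, by omega⟩)) X)
            - b (f (eV n ⟨0, by omega⟩)) X := by abel
        _ = τ • f (eV n ⟨n-1, by omega⟩) - b (f (eV n ⟨0, by omega⟩)) X := by rw [hτ]
    obtain ⟨m', hm'⟩ := hXE1
    have hpair2 : b (f (eV n ⟨n-2, by omega⟩)) (f m')
        + b (f m') (f (eV n ⟨n-2, by omega⟩)) = 0 := by
      rw [← hmorph, ← hmorph, ← map_add, bantisym hn, map_zero]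
    obtain ⟨τ2, hτ2⟩ := Submodule.mem_span_singleton.mp
      (polar_mem_En hn hb hinj hmorph hmax X (f (eV n ⟨n-2, by omega⟩)))
    have hLHS : b (b X (f (eV n ⟨n-2, by omega⟩)) + b (f (eV n ⟨n-2, by omega⟩)) X)
        (f (eV n ⟨0, by omega⟩)) = 0 := by
      rw [← hτ2, map_smul, LinearMap.smul_apply, ← hmorph,
        blast hn ⟨n-1, by omega⟩ (by simp), map_zero, smul_zero]
    have hSid := S_der hb X (f (eV n ⟨n-2, by omega⟩)) (f (eV n ⟨0, by omega⟩))
    rw [hLHS, hE9E1, hm', hXEn, hEnX, hpair2] at hSid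
    have hteq : f (t • eV n ⟨n-1, by omega⟩) = f 0 := by
      rw [map_smul, map_zero]
      rw [zero_add, add_zero] at hSid
      exact hSid.symm
    have ht0 : t = 0 := by
      have hveq := hinj hteq
      have hc := congrFun hveq ⟨n-1, by omega⟩
      simpa [eV_val] using hc
    exact hX ht0
  · push_neg at hcase
    have hΛne := Lam_ne_top hn hinj hid hsolv hdim
    have hbr_ker1 : bracketSpan b ⊤ ⊤
        ≤ LinearMap.ker (phiF hinj hid ⟨0, by omega⟩ ⟨0, by omega⟩) := by
      rw [bracketSpan, Submodule.span_le]
      rintro s ⟨x, -, y, -, rfl⟩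
      exact a1_bracket hn hb hinj hid hmorph x y
    have hN_ker1 : LinearMap.range f
        ≤ LinearMap.ker (phiF hinj hid ⟨0, by omega⟩ ⟨0, by omega⟩) := by
      rintro x ⟨m, rfl⟩
      exact a1_N hn hinj hid hmorph m
    have hmu_of_a1 : ∀ w : L, phiF hinj hid ⟨0, by omega⟩ ⟨0, by omega⟩ w = 0 →
        phiF hinj hid ⟨1, by omega⟩ ⟨1, by omega⟩ w = 0 := by
      intro w hw
      have hc := hcase w
      rw [hw, mul_zero, add_zero] at hc
      exact hc
    have hfr : finrank ℂ (LinearMap.range f) = n := finrank_range_f hinj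
    by_cases hsub : bracketSpan b ⊤ ⊤ ≤ LinearMap.range f
    · have hrk : n + 1 ≤ finrank ℂ
          (LinearMap.ker (phiF hinj hid (⟨0, by omega⟩ : Fin n) ⟨0, by omega⟩)) := by
        have h1 := LinearMap.finrank_range_add_finrank_ker
          (phiF hinj hid (⟨0, by omega⟩ : Fin n) ⟨0, by omega⟩)
        have h2 : finrank ℂ
            (LinearMap.range (phiF hinj hid (⟨0, by omega⟩ : Fin n) ⟨0, by omega⟩)) ≤ 1 := by
          have h3 := Submodule.finrank_le
            (LinearMap.range (phiF hinj hid (⟨0, by omega⟩ : Fin n) ⟨0, by omega⟩))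
          simpa using h3
        omega
      have hex : ∃ w, w ∈ LinearMap.ker (phiF hinj hid (⟨0, by omega⟩ : Fin n) ⟨0, by omega⟩)
          ∧ w ∉ LinearMap.range f := by
        by_contra hcon
        push_neg at hcon
        have hKle : LinearMap.ker (phiF hinj hid (⟨0, by omega⟩ : Fin n) ⟨0, by omega⟩)
            ≤ LinearMap.range f := fun w hw => hcon w hw
        have hmono := Submodule.finrank_mono hKle
        omega
      obtain ⟨w, hwK, hwnr⟩ := hex
      have hwa1 : phiF hinj hid (⟨0, by omega⟩ : Fin n) ⟨0, by omega⟩ w = 0 := hwK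
      exact hwnr (lemmaM hn hb hinj hid hmorph hmax w hwa1 (hmu_of_a1 w hwa1)
        (le_trans hsub le_sup_left))
    · have hNneΛ : LinearMap.range f ≠ bracketSpan b ⊤ ⊤ ⊔ LinearMap.range f := by
        intro h
        exact hsub (by rw [h]; exact le_sup_left)
      obtain ⟨w, hwΛ, hwnr⟩ := SetLike.exists_of_lt
        (lt_of_le_of_ne (le_sup_right : LinearMap.range f ≤ _) hNneΛ)
      have hwa1 : phiF hinj hid (⟨0, by omega⟩ : Fin n) ⟨0, by omega⟩ w = 0 :=
        (sup_le hbr_ker1 hN_ker1) hwΛ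
      have hwmu := hmu_of_a1 w hwa1
      have hJle : LinearMap.range f ⊔ (ℂ ∙ w) ≤ bracketSpan b ⊤ ⊤ ⊔ LinearMap.range f :=
        sup_le le_sup_right ((Submodule.span_singleton_le_iff_mem w _).mpr hwΛ)
      have hΛlt : finrank ℂ ↥(bracketSpan b ⊤ ⊤ ⊔ LinearMap.range f) < n + 2 := by
        have h4 := Submodule.finrank_lt hΛne
        omega
      have hJgt : finrank ℂ ↥(LinearMap.range f)
          < finrank ℂ ↥(LinearMap.range f ⊔ (ℂ ∙ w)) := by
        apply Submodule.finrank_lt_finrank_of_lt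
        refine lt_of_le_of_ne le_sup_left ?_
        intro h
        exact hwnr (h ▸ Submodule.mem_sup_right (Submodule.mem_span_singleton_self w))
      have hJΛ : LinearMap.range f ⊔ (ℂ ∙ w) = bracketSpan b ⊤ ⊤ ⊔ LinearMap.range f :=
        Submodule.eq_of_le_of_finrank_le hJle (by omega)
      exact hwnr (lemmaM hn hb hinj hid hmorph hmax w hwa1 hwmu
        (by rw [hJΛ]; exact le_sup_left))
end

section
/- Let n ≥ 4 and let d be a derivation of the algebra F_n^1. Then there exist scalars α_1, …, α_n, β ∈ ℂ such that d(e_1) = Σ_{i=1}^{n} α_i e_i, d(e_2) = (α_1 + α_2) e_2 + Σ_{i=3}^{n−1} α_i e_i + β e_n, and d(e_i) = ((i−1)α_1 + α_2) e_i + Σ_{j=i+1}^{n} α_{j−i+2} e_j for 3 ≤ i ≤ n. -/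
open Finset Module

lemma E_apply (n i : ℕ) (h1 : 1 ≤ i) (h2 : i ≤ n) (k : Fin n) :
    E n i k = if k.val = i - 1 then 1 else 0 := by
  simp only [E, dif_pos (And.intro h1 h2), Pi.single_apply, Fin.ext_iff]

lemma E_mk (n i m : ℕ) (hm : m < n) :
    E n i ⟨m, hm⟩ = if 1 ≤ i ∧ i ≤ n ∧ m = i - 1 then 1 else 0 := by
  by_cases h : 1 ≤ i ∧ i ≤ n
  · rw [E, dif_pos h, Pi.single_apply]
    simp [Fin.ext_iff, h.1, h.2]
  · rw [E, dif_neg h, if_neg (by tauto)]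
    rfl

lemma bval (n : ℕ) (hn : 4 ≤ n) (x y : Fin n → ℂ) (k : Fin n) :
    bilin n (cF1 n) x y k =
      y ⟨0, by omega⟩ *
        ((if k.val = 2 then x ⟨0, by omega⟩ + x ⟨1, by omega⟩ else 0) +
          (if 3 ≤ k.val then x ⟨k.val - 1, by omega⟩ else 0)) := by
  have hb : bilin n (cF1 n) x y k = ∑ i, ∑ j, x i * y j * cF1 n i j k := rfl
  rw [hb]
  have h0 : ∀ i : Fin n, (∑ j, x i * y j * cF1 n i j k)
      = x i * y ⟨0, by omega⟩ *
        (if (i.val = 0 ∧ k.val = 2) ∨ (1 ≤ i.val ∧ k.val = i.val + 1) then 1 else 0) := by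
    intro i
    rw [Finset.sum_eq_single (⟨0, by omega⟩ : Fin n)]
    · simp [cF1]
    · intro j _ hj
      have : j.val ≠ 0 := fun h => hj (Fin.ext h)
      simp [cF1, this]
    · intro h; exact absurd (Finset.mem_univ _) h
  rw [Finset.sum_congr rfl (fun i _ => h0 i)]
  by_cases hk2 : k.val = 2
  · rw [if_pos hk2, if_neg (by omega)]
    have step : ∀ i : Fin n, x i * y ⟨0, by omega⟩ *
        (if (i.val = 0 ∧ k.val = 2) ∨ (1 ≤ i.val ∧ k.val = i.val + 1) then 1 else 0)
        = (if i = ⟨0, by omega⟩ then x i * y ⟨0, by omega⟩ else 0)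
          + (if i = ⟨1, by omega⟩ then x i * y ⟨0, by omega⟩ else 0) := by
      intro i
      by_cases hA : i = ⟨0, by omega⟩
      · subst hA
        rw [if_pos (Or.inl ⟨rfl, hk2⟩), if_pos rfl, if_neg (by simp [Fin.ext_iff])]
        ring
      · by_cases hBc : i = ⟨1, by omega⟩
        · subst hBc
          rw [if_pos (Or.inr ⟨by show (1:ℕ) ≤ 1; omega, by show k.val = 1 + 1; omega⟩),
            if_neg hA, if_pos rfl]
          ring
        · have hA' : i.val ≠ 0 := fun h => hA (Fin.ext h)
          have hB' : i.val ≠ 1 := fun h => hBc (Fin.ext h)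
          rw [if_neg (by omega), if_neg hA, if_neg hBc]
          ring
    rw [Finset.sum_congr rfl (fun i _ => step i), Finset.sum_add_distrib,
      Finset.sum_ite_eq', Finset.sum_ite_eq']
    simp only [Finset.mem_univ, if_true]
    ring
  · rw [if_neg hk2]
    by_cases hk3 : 3 ≤ k.val
    · rw [if_pos hk3]
      have step : ∀ i : Fin n, x i * y ⟨0, by omega⟩ *
          (if (i.val = 0 ∧ k.val = 2) ∨ (1 ≤ i.val ∧ k.val = i.val + 1) then 1 else 0)
          = (if i = ⟨k.val - 1, by omega⟩ then x i * y ⟨0, by omega⟩ else 0) := by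
        intro i
        by_cases hC : i = ⟨k.val - 1, by omega⟩
        · subst hC
          rw [if_pos (Or.inr ⟨by show (1:ℕ) ≤ k.val - 1; omega,
              by show k.val = (k.val - 1) + 1; omega⟩), if_pos rfl]
          ring
        · have hC' : i.val ≠ k.val - 1 := fun h => hC (Fin.ext h)
          rw [if_neg (by omega), if_neg hC]
          ring
      rw [Finset.sum_congr rfl (fun i _ => step i), Finset.sum_ite_eq']
      simp only [Finset.mem_univ, if_true]
      ring
    · rw [if_neg hk3]
      have step : ∀ i : Fin n, x i * y ⟨0, by omega⟩ *
          (if (i.val = 0 ∧ k.val = 2) ∨ (1 ≤ i.val ∧ k.val = i.val + 1) then 1 else 0)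
          = 0 := by
        intro i
        rw [if_neg (by omega)]
        ring
      rw [Finset.sum_congr rfl (fun i _ => step i), Finset.sum_const_zero]
      ring

lemma sumE (n l m : ℕ) (hl : 1 ≤ l) (hm : m ≤ n) (c : ℕ → ℂ) (k : Fin n) :
    (∑ i ∈ Finset.Icc l m, c i • E n i) k
      = if l ≤ k.val + 1 ∧ k.val + 1 ≤ m then c (k.val + 1) else 0 := by
  rw [Finset.sum_apply]
  have step : ∀ i ∈ Finset.Icc l m, (c i • E n i) k = if i = k.val + 1 then c i else 0 := by
    intro i hi
    simp only [Finset.mem_Icc] at hi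
    have hE : E n i k = if k.val = i - 1 then 1 else 0 := E_apply n i (by omega) (by omega) k
    rw [Pi.smul_apply, hE, smul_eq_mul]
    by_cases h : i = k.val + 1
    · rw [if_pos (by omega), if_pos h]; ring
    · rw [if_neg (by omega), if_neg h]; ring
  rw [Finset.sum_congr rfl step, Finset.sum_ite_eq' (Finset.Icc l m) (k.val + 1) c]
  simp [Finset.mem_Icc]

set_option maxHeartbeats 2000000 in
theorem statement12 (n : ℕ) (hn : 4 ≤ n)
    (d : (Fin n → ℂ) →ₗ[ℂ] (Fin n → ℂ)) (hd : IsDerivation (bilin n (cF1 n)) d) :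
    ∃ (a : ℕ → ℂ) (β : ℂ),
      d (E n 1) = ∑ i ∈ Finset.Icc 1 n, a i • E n i ∧
      d (E n 2) = (a 1 + a 2) • E n 2 + (∑ i ∈ Finset.Icc 3 (n-1), a i • E n i) + β • E n n ∧
      ∀ i ∈ Finset.Icc 3 n, d (E n i) =
        (((i : ℂ) - 1) * a 1 + a 2) • E n i + ∑ j ∈ Finset.Icc (i+1) n, a (j - i + 2) • E n j := by
  have hB := bval n hn
  have hvm : ∀ (m : ℕ) (h : m < n), ((⟨m, h⟩ : Fin n) : ℕ) = m := fun _ _ => rfl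
  -- products
  have p11 : bilin n (cF1 n) (E n 1) (E n 1) = E n 3 := by
    funext k
    rw [hB, E_apply n 3 (by omega) (by omega)]
    simp only [E_mk, hvm, and_true, true_and, and_false, false_and]
    split_ifs <;> first | omega | tauto | norm_num
  have pi1 : ∀ i : ℕ, 2 ≤ i → i + 1 ≤ n → bilin n (cF1 n) (E n i) (E n 1) = E n (i+1) := by
    intro i h2 h3
    funext k
    rw [hB, E_apply n (i+1) (by omega) (by omega)]
    simp only [E_mk, hvm, and_true, true_and, and_false, false_and]
    split_ifs <;> first | omega | tauto | norm_num
  have pz : ∀ (x : Fin n → ℂ) (j : ℕ), 2 ≤ j → j ≤ n → bilin n (cF1 n) x (E n j) = 0 := by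
    intro x j h2 h3
    funext k
    simp only [hB, E_mk, hvm, Pi.zero_apply]
    rw [if_neg (by omega)]
    ring
  set a : ℕ → ℂ := fun i => if h : 1 ≤ i ∧ i ≤ n then d (E n 1) ⟨i - 1, by omega⟩ else 0 with ha
  set β : ℂ := d (E n 2) ⟨n - 1, by omega⟩ with hβ
  have haval : ∀ (m : ℕ) (hm : m < n), d (E n 1) ⟨m, hm⟩ = a (m + 1) := by
    intro m hm
    simp only [ha]
    rw [dif_pos (⟨by omega, by omega⟩ : 1 ≤ m + 1 ∧ m + 1 ≤ n)]
    rfl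
  -- Step A
  have hA : ∀ j : ℕ, 2 ≤ j → j ≤ n → ∀ h0 : (0:ℕ) < n, d (E n j) ⟨0, h0⟩ = 0 := by
    intro j hj2 hjn h0
    have h := hd (E n 2) (E n j)
    rw [pz (E n 2) j hj2 hjn, map_zero, pz (d (E n 2)) j hj2 hjn, zero_add] at h
    have h2 := congrFun h ⟨2, by omega⟩
    rw [hB] at h2
    simp only [E_mk, hvm, Pi.zero_apply, and_true, true_and, and_false, false_and] at h2
    split_ifs at h2 <;> first | omega | tauto | (norm_num at h2; first | exact h2 | exact h2.symm)
  -- Step B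
  have e1 := hd (E n 1) (E n 1)
  rw [p11] at e1
  have e2 := hd (E n 2) (E n 1)
  rw [pi1 2 (by omega) (by omega)] at e2
  have e12 : ∀ k : Fin n,
      bilin n (cF1 n) (d (E n 1)) (E n 1) k + bilin n (cF1 n) (E n 1) (d (E n 1)) k
        = bilin n (cF1 n) (d (E n 2)) (E n 1) k + bilin n (cF1 n) (E n 2) (d (E n 1)) k := by
    intro k
    have h := congrFun (e1.symm.trans e2) k
    rw [Pi.add_apply, Pi.add_apply] at h
    exact h
  have hd2a : ∀ h1 : (1:ℕ) < n, d (E n 2) ⟨1, h1⟩ = a 1 + a 2 := by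
    intro h1
    have h2 := e12 ⟨2, by omega⟩
    simp only [hB, E_mk, hvm, haval, hA 2 (by omega) (by omega),
      (show (1:ℕ) ≤ n from by omega), (show (2:ℕ) ≤ n from by omega),
      and_true, true_and, and_false, false_and] at h2
    norm_num at h2
    first | exact h2 | exact h2.symm | linear_combination h2
  have hd2b : ∀ m : ℕ, 2 ≤ m → m ≤ n - 2 → ∀ hm : m < n, d (E n 2) ⟨m, hm⟩ = a (m + 1) := by
    intro m hm2 hmn hm
    have h2 := e12 ⟨m + 1, by omega⟩
    simp only [hB, E_mk, hvm, Nat.add_sub_cancel, haval, hA 2 (by omega) (by omega),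
      (show (1:ℕ) ≤ n from by omega), (show (2:ℕ) ≤ n from by omega),
      and_true, true_and, and_false, false_and] at h2
    split_ifs at h2 <;> first | omega | (norm_num at h2; first | exact h2 | exact h2.symm | linear_combination h2)
  have hd2full : ∀ k : Fin n, d (E n 2) k
      = (if (k:ℕ) = 1 then a 1 + a 2 else 0)
        + (if 2 ≤ (k:ℕ) ∧ (k:ℕ) ≤ n - 2 then a ((k:ℕ) + 1) else 0)
        + (if (k:ℕ) = n - 1 then β else 0) := by
    intro k
    by_cases h0 : (k:ℕ) = 0
    · rw [if_neg (by omega), if_neg (by omega), if_neg (by omega),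
        show k = ⟨0, by omega⟩ from Fin.ext h0, hA 2 (by omega) (by omega)]
      norm_num
    · by_cases h1 : (k:ℕ) = 1
      · rw [if_pos h1, if_neg (by omega), if_neg (by omega),
          show k = ⟨1, by omega⟩ from Fin.ext h1, hd2a]
        ring
      · by_cases hmid : (k:ℕ) ≤ n - 2
        · rw [if_neg h1, if_pos ⟨by omega, hmid⟩, if_neg (by omega)]
          have := hd2b (k:ℕ) (by omega) (by omega) k.isLt
          rw [zero_add, add_zero]
          exact this
        · have hk : (k:ℕ) = n - 1 := by omega
          rw [if_neg h1, if_neg (by omega), if_pos hk, zero_add, zero_add,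
            show k = ⟨n - 1, by omega⟩ from Fin.ext hk]
  -- Step C
  have hC : ∀ m : ℕ, 2 ≤ m → m + 1 ≤ n → ∀ k : Fin n,
      d (E n (m + 1)) k = (if (k:ℕ) = m then (m : ℂ) * a 1 + a 2 else 0)
        + (if m + 1 ≤ (k:ℕ) then a ((k:ℕ) - m + 2) else 0) := by
    intro m hm2
    induction m, hm2 using Nat.le_induction with
    | base =>
      intro _ k
      have h2 := congrFun e2 k
      rw [Pi.add_apply] at h2
      simp only [hB, E_mk, hvm, haval, hd2full] at h2
      rw [h2]
      by_cases hk2 : (k:ℕ) = 2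
      · simp only [hk2, (show (1:ℕ) ≤ n from by omega), (show (2:ℕ) ≤ n from by omega),
          (show ¬((0:ℕ) = n - 1) from by omega), (show ¬((1:ℕ) = n - 1) from by omega)]
        norm_num
        ring
      · by_cases hk3 : 3 ≤ (k:ℕ)
        · simp only [hk2, hk3, (show (1:ℕ) ≤ n from by omega), (show (2:ℕ) ≤ n from by omega),
            (show ¬((0:ℕ) = n - 1) from by omega), (show ¬((1:ℕ) = n - 1) from by omega),
            (show ¬((k:ℕ) - 1 = 1) from by omega), (show 2 ≤ (k:ℕ) - 1 from by omega),
            (show (k:ℕ) - 1 ≤ n - 2 from by omega), (show ¬((k:ℕ) - 1 = n - 1) from by omega)]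
          rw [show (k:ℕ) - 1 + 1 = (k:ℕ) - 2 + 2 from by omega]
          norm_num
        · simp only [hk2, hk3, (show ¬(2 + 1 ≤ (k:ℕ)) from by omega)]
          norm_num
    | succ m hm ih =>
      intro hm1 k
      have em := hd (E n (m + 1)) (E n 1)
      rw [pi1 (m + 1) (by omega) (by omega)] at em
      have h2 := congrFun em k
      rw [Pi.add_apply] at h2
      simp only [hB, E_mk, hvm, Nat.add_sub_cancel, haval, ih (by omega),
        (show (1:ℕ) ≤ n from by omega), (show ¬((0:ℕ) = m) from by omega),
        (show ¬(m + 1 ≤ 0) from by omega), (show ¬((1:ℕ) = m) from by omega),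
        (show ¬(m + 1 ≤ 1) from by omega), (show 1 ≤ m + 1 from by omega),
        (show m + 1 ≤ n from by omega),
        and_true, true_and, and_false, false_and] at h2
      rw [h2]
      by_cases hk2 : (k:ℕ) = 2
      · simp only [hk2, (show ¬((2:ℕ) = m + 1) from by omega),
          (show ¬(m + 1 + 1 ≤ 2) from by omega)]
        norm_num
      · by_cases hk3 : 3 ≤ (k:ℕ)
        · by_cases hkm : (k:ℕ) = m + 1
          · simp only [hk2, hk3, hkm, (show (k:ℕ) - 1 = m from by omega),
              (show ¬(m + 1 ≤ m) from by omega), (show ¬(m + 1 + 1 ≤ m + 1) from by omega)]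
            norm_num [hm, (show 3 ≤ m + 1 from by omega)]
            push_cast
            ring
          · by_cases hkM : m + 1 + 1 ≤ (k:ℕ)
            · simp only [hk2, hk3, hkm, hkM, (show ¬((k:ℕ) - 1 = m) from by omega),
                (show m + 1 ≤ (k:ℕ) - 1 from by omega)]
              rw [show (k:ℕ) - 1 - m + 2 = (k:ℕ) - (m + 1) + 2 from by omega]
              norm_num
            · simp only [hk2, hk3, hkm, hkM, (show ¬((k:ℕ) - 1 = m) from by omega),
                (show ¬(m + 1 ≤ (k:ℕ) - 1) from by omega)]
              norm_num
        · simp only [hk2, hk3, (show ¬((k:ℕ) = m + 1) from by omega),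
            (show ¬(m + 1 + 1 ≤ (k:ℕ)) from by omega)]
          norm_num
  -- Assembly
  refine ⟨a, β, ?_, ?_, ?_⟩
  · funext k
    rw [sumE n 1 n (by omega) (le_refl n), if_pos ⟨by omega, by omega⟩]
    exact haval (k:ℕ) k.isLt
  · funext k
    rw [Pi.add_apply, Pi.add_apply, sumE n 3 (n - 1) (by omega) (by omega),
      Pi.smul_apply, Pi.smul_apply, smul_eq_mul, smul_eq_mul,
      E_apply n 2 (by omega) (by omega), E_apply n n (by omega) (by omega), hd2full k]
    split_ifs <;> first | omega | ring | norm_num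
  · intro i hi
    rw [Finset.mem_Icc] at hi
    funext k
    rw [Pi.add_apply, Pi.smul_apply, smul_eq_mul, E_apply n i (by omega) (by omega),
      sumE n (i + 1) n (by omega) (le_refl n)]
    have hci := hC (i - 1) (by omega) (by omega) k
    rw [show i - 1 + 1 = i from by omega] at hci
    rw [hci]
    split_ifs <;>
      first
        | omega
        | (rw [show (k:ℕ) - (i - 1) + 2 = (k:ℕ) + 1 - i + 2 from by omega];
            push_cast [Nat.cast_sub (by omega : 1 ≤ i)]; ring)
        | (push_cast [Nat.cast_sub (by omega : 1 ≤ i)]; ring)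
        | norm_num
end
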